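/- arXiv:2404.17116 — 4 statements merged into one kernel-verified Lean document; each statement's English description precedes it below -/
import Mathlib

section
/- The graph consisting of a double ray …v₋₂v₋₁v₀v₁v₂… together with one additional vertex v∞ adjacent to every vertex vₙ (n ∈ ℤ) has exactly two ends but exactly one edge-end. -/
open SimpleGraph

universe u

/-- A ray (one-way infinite path) in a graph. -/
structure GraphRay {V : Type u} (G : SimpleGraph V) : Type u where
  f : ℕ → V
  inj : Function.Injective f
  adj : ∀ n : ℕ, G.Adj (f n) (f (n + 1))

/-- The graph `G - S`: delete a set of vertices (they become isolated). -/
def SimpleGraph.vDel {V : Type u} (G : SimpleGraph V) (S : Set V) : SimpleGraph V where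
  Adj u v := G.Adj u v ∧ u ∉ S ∧ v ∉ S
  symm := ⟨fun u v h => ⟨h.1.symm, h.2.2, h.2.1⟩⟩
  loopless := ⟨fun v h => G.loopless.irrefl v h.1⟩

/-- The graph `G - F`: delete a set of edges. -/
def SimpleGraph.eDel {V : Type u} (G : SimpleGraph V) (F : Set (Sym2 V)) : SimpleGraph V where
  Adj u v := G.Adj u v ∧ s(u, v) ∉ F
  symm := ⟨fun u v h => ⟨h.1.symm, by rw [Sym2.eq_swap]; exact h.2⟩⟩
  loopless := ⟨fun v h => G.loopless.irrefl v h.1⟩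

/-- Tails of the rays `r` and `s` lie in the same connected component of `G - S`. -/
def GraphRay.VConn {V : Type u} (G : SimpleGraph V) (S : Set V) (r s : GraphRay G) : Prop :=
  ∃ N M : ℕ, (∀ n, N ≤ n → r.f n ∉ S) ∧ (∀ m, M ≤ m → s.f m ∉ S) ∧
    (G.vDel S).Reachable (r.f N) (s.f M)

/-- Tails of the rays `r` and `s` lie in the same connected component of `G - F`. -/
def GraphRay.EConn {V : Type u} (G : SimpleGraph V) (F : Set (Sym2 V)) (r s : GraphRay G) : Prop :=
  ∃ N M : ℕ, (∀ n, N ≤ n → s(r.f n, r.f (n + 1)) ∉ F) ∧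
    (∀ m, M ≤ m → s(s.f m, s.f (m + 1)) ∉ F) ∧
    (G.eDel F).Reachable (r.f N) (s.f M)

/-- The end relation: no finite vertex set separates the two rays. -/
def endEquiv {V : Type u} (G : SimpleGraph V) (r s : GraphRay G) : Prop :=
  ∀ S : Set V, S.Finite → GraphRay.VConn G S r s

/-- The edge-end relation: no finite edge set separates the two rays. -/
def edgeEndEquiv {V : Type u} (G : SimpleGraph V) (r s : GraphRay G) : Prop :=
  ∀ F : Set (Sym2 V), F.Finite → F ⊆ G.edgeSet → GraphRay.EConn G F r s

/-- `v` dominates the ray `r`: no finite vertex set avoiding `v` separates `v` from a tail of `r`. -/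
def dominates {V : Type u} (G : SimpleGraph V) (v : V) (r : GraphRay G) : Prop :=
  ∀ S : Set V, S.Finite → v ∉ S →
    ∃ N : ℕ, (∀ n, N ≤ n → r.f n ∉ S) ∧ (G.vDel S).Reachable v (r.f N)

/-- `v` edge-dominates the ray `r`: no finite edge set separates `v` from a tail of `r`. -/
def edgeDominates {V : Type u} (G : SimpleGraph V) (v : V) (r : GraphRay G) : Prop :=
  ∀ F : Set (Sym2 V), F.Finite → F ⊆ G.edgeSet →
    ∃ N : ℕ, (∀ n, N ≤ n → s(r.f n, r.f (n + 1)) ∉ F) ∧ (G.eDel F).Reachable v (r.f N)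

/-- The end space of `G` as a quotient of the set of rays. -/
def EndSpace {V : Type u} (G : SimpleGraph V) : Type u := Quot (endEquiv G)

/-- The edge-end space of `G` as a quotient of the set of rays. -/
def EdgeEndSpace {V : Type u} (G : SimpleGraph V) : Type u := Quot (edgeEndEquiv G)

/-- The end topology, generated by the sets `Ω(S, [r])` for finite `S ⊆ V(G)`. -/
instance {V : Type u} (G : SimpleGraph V) : TopologicalSpace (EndSpace G) :=
  TopologicalSpace.generateFrom
    {O | ∃ (S : Set V) (_ : S.Finite) (r : GraphRay G),
      O = {x | ∃ s : GraphRay G, x = Quot.mk (endEquiv G) s ∧ GraphRay.VConn G S r s}}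

/-- The edge-end topology, generated by the sets `Ω_E(F, [r]_E)` for finite `F ⊆ E(G)`. -/
instance {V : Type u} (G : SimpleGraph V) : TopologicalSpace (EdgeEndSpace G) :=
  TopologicalSpace.generateFrom
    {O | ∃ (F : Set (Sym2 V)) (_ : F.Finite) (_ : F ⊆ G.edgeSet) (r : GraphRay G),
      O = {x | ∃ s : GraphRay G, x = Quot.mk (edgeEndEquiv G) s ∧ GraphRay.EConn G F r s}}

/-- The graph consisting of a double ray `…v₋₁v₀v₁…` (vertices `some n`, `n : ℤ`)
together with one extra vertex `v∞ = none` adjacent to every vertex of the double ray. -/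
def dominatedDoubleRay : SimpleGraph (Option ℤ) :=
  SimpleGraph.fromRel (fun x y => (∃ n : ℤ, x = some n ∧ y = some (n + 1)) ∨ x = none)

lemma ddr_adj {x y : Option ℤ} : dominatedDoubleRay.Adj x y ↔ x ≠ y ∧
    ((∃ n : ℤ, x = some n ∧ y = some (n+1)) ∨ (∃ n : ℤ, y = some n ∧ x = some (n+1)) ∨
      x = none ∨ y = none) := by
  simp only [dominatedDoubleRay, SimpleGraph.fromRel_adj]
  constructor
  · rintro ⟨h, (h1 | h1) | (h1 | h1)⟩
    · exact ⟨h, Or.inl h1⟩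
    · exact ⟨h, Or.inr (Or.inr (Or.inl h1))⟩
    · exact ⟨h, Or.inr (Or.inl h1)⟩
    · exact ⟨h, Or.inr (Or.inr (Or.inr h1))⟩
  · rintro ⟨h, h1 | h1 | h1 | h1⟩
    · exact ⟨h, Or.inl (Or.inl h1)⟩
    · exact ⟨h, Or.inr (Or.inl h1)⟩
    · exact ⟨h, Or.inl (Or.inr h1)⟩
    · exact ⟨h, Or.inr (Or.inr h1)⟩

/-- the increasing ray -/
def rayR : GraphRay dominatedDoubleRay where
  f n := some (n : ℤ)
  inj := fun a b h => by simpa using h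
  adj n := by
    rw [ddr_adj]
    exact ⟨by simp, Or.inl ⟨(n : ℤ), rfl, by push_cast; ring_nf⟩⟩

/-- the decreasing ray -/
def rayS : GraphRay dominatedDoubleRay where
  f n := some (-(n : ℤ))
  inj := fun a b h => by simpa using h
  adj n := by
    rw [ddr_adj]
    refine ⟨by simp, Or.inr (Or.inl ⟨-((n:ℤ)+1), by push_cast; ring_nf, by push_cast; ring_nf⟩)⟩

/-- Steps between `some` vertices move by ±1. -/
lemma ddr_step {a b : ℤ} (h : dominatedDoubleRay.Adj (some a) (some b)) :
    b = a + 1 ∨ b = a - 1 := by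
  rw [ddr_adj] at h
  obtain ⟨-, ⟨n, hn1, hn2⟩ | ⟨n, hn1, hn2⟩ | h | h⟩ := h
  · simp only [Option.some.injEq] at hn1 hn2; omega
  · simp only [Option.some.injEq] at hn1 hn2; omega
  · exact absurd h (by simp)
  · exact absurd h (by simp)

/-- Every ray in the graph eventually follows the double ray monotonically. -/
lemma tail_structure (t : GraphRay dominatedDoubleRay) :
    (∃ (N₀ : ℕ) (c : ℤ), ∀ n : ℕ, t.f (N₀ + n) = some (c + n)) ∨
    (∃ (N₀ : ℕ) (c : ℤ), ∀ n : ℕ, t.f (N₀ + n) = some (c - n)) := by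
  -- none occurs at most once
  have hnone : ∃ N₀ : ℕ, ∀ n, t.f (N₀ + n) ≠ none := by
    by_cases h : ∃ i, t.f i = none
    · obtain ⟨i, hi⟩ := h
      refine ⟨i + 1, fun n hn => ?_⟩
      have := t.inj (hn.trans hi.symm)
      omega
    · exact ⟨0, fun n hn => h ⟨0 + n, hn⟩⟩
  obtain ⟨N₀, hN₀⟩ := hnone
  set g : ℕ → ℤ := fun n => (t.f (N₀ + n)).getD 0 with hg
  have hval : ∀ n, t.f (N₀ + n) = some (g n) := by
    intro n
    cases h : t.f (N₀ + n) with
    | none => exact absurd h (hN₀ n)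
    | some k => simp [hg, h]
  have ginj : Function.Injective g := by
    intro a b hab
    have : t.f (N₀ + a) = t.f (N₀ + b) := by rw [hval, hval, hab]
    have := t.inj this
    omega
  have gstep : ∀ n, g (n + 1) = g n + 1 ∨ g (n + 1) = g n - 1 := by
    intro n
    have h := t.adj (N₀ + n)
    rw [hval n, show N₀ + n + 1 = N₀ + (n + 1) by ring, hval (n + 1)] at h
    exact ddr_step h
  rcases gstep 0 with h0 | h0
  · left
    have mono : ∀ n, g (n + 1) = g n + 1 := by
      intro n
      induction n with
      | zero => exact h0
      | succ k ih =>
        rcases gstep (k + 1) with h | h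
        · exact h
        · exfalso
          have hgk : g (k + 1 + 1) = g k := by omega
          have := ginj hgk
          omega
    refine ⟨N₀, g 0, fun n => ?_⟩
    rw [hval n]
    congr 1
    induction n with
    | zero => simp
    | succ k ih => rw [mono k] at *; push_cast; push_cast at ih; omega
  · right
    have mono : ∀ n, g (n + 1) = g n - 1 := by
      intro n
      induction n with
      | zero => exact h0
      | succ k ih =>
        rcases gstep (k + 1) with h | h
        · exfalso
          have hgk : g (k + 1 + 1) = g k := by omega
          have := ginj hgk
          omega
        · exact h
    refine ⟨N₀, g 0, fun n => ?_⟩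
    rw [hval n]
    congr 1
    induction n with
    | zero => simp
    | succ k ih => rw [mono k] at *; push_cast; push_cast at ih; omega

/-- A finite set of integers is bounded in absolute value. -/
lemma bound_of_finite {C : Set ℤ} (h : C.Finite) :
    ∃ K : ℤ, 1 ≤ K ∧ ∀ x ∈ C, -K < x ∧ x < K := by
  obtain ⟨b, hb⟩ := (h.image abs).bddAbove
  refine ⟨max 1 (b + 1), le_max_left _ _, fun x hx => ?_⟩
  have h1 : |x| ≤ b := hb (Set.mem_image_of_mem abs hx)
  have h2 := le_max_right 1 (b + 1)
  have h3 := abs_le.mp h1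
  constructor <;> omega

/-- In `G - {none, some 0}`, positivity is preserved along walks. -/
lemma walk_pos : ∀ {u v : Option ℤ},
    (dominatedDoubleRay.vDel {none, some 0}).Walk u v →
    (∃ k : ℤ, u = some k ∧ 1 ≤ k) → ∃ k : ℤ, v = some k ∧ 1 ≤ k := by
  intro u v w
  induction w with
  | nil => exact id
  | @cons a b c h _ ih =>
    intro hu
    apply ih
    obtain ⟨k, rfl, hk⟩ := hu
    obtain ⟨hadj, hu', hv'⟩ := h
    cases hb : b with
    | none => exact absurd (by simp [hb]) (hb ▸ hv')
    | some j =>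
      rw [hb] at hadj hv'
      rcases ddr_step hadj with h | h
      · exact ⟨j, rfl, by omega⟩
      · have : j ≠ 0 := fun hj => hv' (by simp [hj])
        exact ⟨j, rfl, by omega⟩

lemma not_endEquiv_rayR_rayS : ¬ endEquiv dominatedDoubleRay rayR rayS := by
  intro h
  obtain ⟨N, M, hN, hM, hreach⟩ := h {none, some 0} (Set.toFinite _)
  have hN1 : (1 : ℤ) ≤ (N : ℤ) := by
    have := hN N le_rfl
    simp only [rayR, Set.mem_insert_iff, Set.mem_singleton_iff] at this
    push_neg at this
    have h2 := this.2
    have : (N : ℤ) ≠ 0 := fun hh => h2 (by rw [hh])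
    omega
  have hM1 : (1 : ℤ) ≤ (M : ℤ) := by
    have := hM M le_rfl
    simp only [rayS, Set.mem_insert_iff, Set.mem_singleton_iff] at this
    push_neg at this
    have h2 := this.2
    have : (M : ℤ) ≠ 0 := fun hh => h2 (by rw [hh, neg_zero])
    omega
  obtain ⟨w⟩ := hreach
  obtain ⟨k, hk, hk1⟩ := walk_pos w ⟨(N : ℤ), rfl, hN1⟩
  simp only [rayS, Option.some.injEq] at hk
  omega

lemma endEquiv_of_inc (t : GraphRay dominatedDoubleRay) (N₀ : ℕ) (c : ℤ)
    (ht : ∀ n : ℕ, t.f (N₀ + n) = some (c + n)) : endEquiv dominatedDoubleRay t rayR := by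
  intro S hS
  have hC : (some ⁻¹' S : Set ℤ).Finite := hS.preimage (Option.some_injective ℤ).injOn
  obtain ⟨K, hK1, hK⟩ := bound_of_finite hC
  set M₀ : ℕ := (K - c).toNat with hM₀
  set v : ℤ := c + M₀ with hv
  have hvK : K ≤ v := by
    have := Int.self_le_toNat (K - c)
    omega
  set M : ℕ := v.toNat with hM
  have hMv : (M : ℤ) = v := Int.toNat_of_nonneg (by omega)
  refine ⟨N₀ + M₀, M, ?_, ?_, ?_⟩
  · intro n hn
    have hform : t.f n = some (c + (n - N₀ : ℕ)) := by
      have := ht (n - N₀)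
      rwa [show N₀ + (n - N₀) = n by omega] at this
    rw [hform]
    intro hmem
    have := hK _ hmem
    have : (K : ℤ) ≤ c + ((n - N₀ : ℕ) : ℤ) := by
      have : (M₀ : ℤ) ≤ ((n - N₀ : ℕ) : ℤ) := by
        push_cast; omega
      omega
    omega
  · intro m hm
    show some (m : ℤ) ∉ S
    intro hmem
    have := hK _ hmem
    have : v ≤ (m : ℤ) := by
      rw [← hMv]; exact_mod_cast Nat.cast_le.mpr hm
    omega
  · have : t.f (N₀ + M₀) = rayR.f M := by
      rw [ht M₀]
      show some v = some (M : ℤ)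
      rw [hMv]
    rw [this]

lemma endEquiv_of_dec (t : GraphRay dominatedDoubleRay) (N₀ : ℕ) (c : ℤ)
    (ht : ∀ n : ℕ, t.f (N₀ + n) = some (c - n)) : endEquiv dominatedDoubleRay t rayS := by
  intro S hS
  have hC : (some ⁻¹' S : Set ℤ).Finite := hS.preimage (Option.some_injective ℤ).injOn
  obtain ⟨K, hK1, hK⟩ := bound_of_finite hC
  set M₀ : ℕ := (c + K).toNat with hM₀
  set v : ℤ := c - M₀ with hv
  have hvK : v ≤ -K := by
    have := Int.self_le_toNat (c + K)
    omega
  set M : ℕ := (-v).toNat with hM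
  have hMv : (M : ℤ) = -v := Int.toNat_of_nonneg (by omega)
  refine ⟨N₀ + M₀, M, ?_, ?_, ?_⟩
  · intro n hn
    have hform : t.f n = some (c - (n - N₀ : ℕ)) := by
      have := ht (n - N₀)
      rwa [show N₀ + (n - N₀) = n by omega] at this
    rw [hform]
    intro hmem
    have := hK _ hmem
    have : c - ((n - N₀ : ℕ) : ℤ) ≤ -K := by
      have : (M₀ : ℤ) ≤ ((n - N₀ : ℕ) : ℤ) := by
        push_cast; omega
      omega
    omega
  · intro m hm
    show some (-(m : ℤ)) ∉ S
    intro hmem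
    have := hK _ hmem
    have : (M : ℤ) ≤ (m : ℤ) := by exact_mod_cast Nat.cast_le.mpr hm
    omega
  · have : t.f (N₀ + M₀) = rayS.f M := by
      rw [ht M₀]
      show some v = some (-(M : ℤ))
      rw [hMv, neg_neg]
    rw [this]

lemma edgeEndEquiv_all (r s : GraphRay dominatedDoubleRay) :
    edgeEndEquiv dominatedDoubleRay r s := by
  intro F hF hFsub
  set A : Set ℤ := {k | s(none, some k) ∈ F} with hA
  set B : Set ℤ := {k | s(some k, some (k + 1)) ∈ F} with hB
  have hAfin : A.Finite := by
    have : A = (fun k : ℤ => s((none : Option ℤ), some k)) ⁻¹' F := rfl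
    rw [this]
    apply hF.preimage
    intro a _ b _ hab
    simp only [Sym2.eq_iff] at hab
    rcases hab with ⟨-, h⟩ | ⟨h, -⟩
    · exact Option.some_injective ℤ h
    · exact absurd h (by simp)
  have hBfin : B.Finite := by
    have : B = (fun k : ℤ => s(some k, some (k + 1))) ⁻¹' F := rfl
    rw [this]
    apply hF.preimage
    intro a _ b _ hab
    simp only [Sym2.eq_iff, Option.some.injEq] at hab
    omega
  obtain ⟨K, hK1, hK⟩ := bound_of_finite (hAfin.union hBfin)
  have hKA : ∀ x ∈ A, -K < x ∧ x < K := fun x hx => hK x (Or.inl hx)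
  have hKB : ∀ x ∈ B, -K < x ∧ x < K := fun x hx => hK x (Or.inr hx)
  -- every ray has a far-out tail avoiding F
  have key : ∀ t : GraphRay dominatedDoubleRay, ∃ (N : ℕ) (a : ℤ),
      t.f N = some a ∧ (K ≤ a ∨ a ≤ -K) ∧
      ∀ n, N ≤ n → s(t.f n, t.f (n + 1)) ∉ F := by
    intro t
    rcases tail_structure t with ⟨N₀, c, ht⟩ | ⟨N₀, c, ht⟩
    · set M₀ : ℕ := (K - c).toNat with hM₀
      have hM₀K : K ≤ c + M₀ := by
        have := Int.self_le_toNat (K - c)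
        omega
      refine ⟨N₀ + M₀, c + M₀, ht M₀, Or.inl hM₀K, fun n hn => ?_⟩
      set m : ℕ := n - N₀ with hm
      have hmM : M₀ ≤ m := by omega
      have h1 : t.f n = some (c + m) := by
        have := ht m
        rwa [show N₀ + m = n by omega] at this
      have h2 : t.f (n + 1) = some ((c + m) + 1) := by
        have := ht (m + 1)
        rw [show N₀ + (m + 1) = n + 1 by omega] at this
        rw [this]
        congr 1
        push_cast
        ring
      rw [h1, h2]
      intro hmem
      have : (c + m) ∈ B := hmem
      have := hKB _ this
      have : (M₀ : ℤ) ≤ (m : ℤ) := by exact_mod_cast hmM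
      omega
    · set M₀ : ℕ := (c + K).toNat with hM₀
      have hM₀K : c - M₀ ≤ -K := by
        have := Int.self_le_toNat (c + K)
        omega
      refine ⟨N₀ + M₀, c - M₀, ht M₀, Or.inr hM₀K, fun n hn => ?_⟩
      set m : ℕ := n - N₀ with hm
      have hmM : M₀ ≤ m := by omega
      have h1 : t.f n = some ((c - (m + 1 : ℕ)) + 1) := by
        have := ht m
        rw [show N₀ + m = n by omega] at this
        rw [this]
        congr 1
        push_cast
        ring
      have h2 : t.f (n + 1) = some (c - (m + 1 : ℕ)) := by
        have := ht (m + 1)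
        rwa [show N₀ + (m + 1) = n + 1 by omega] at this
      rw [h1, h2, Sym2.eq_swap]
      intro hmem
      have : (c - (m + 1 : ℕ)) ∈ B := hmem
      have := hKB _ this
      have : (M₀ : ℤ) ≤ (m : ℤ) := by exact_mod_cast hmM
      push_cast at *
      omega
  obtain ⟨N, a, hra, haK, hrtail⟩ := key r
  obtain ⟨M, b, hsb, hbK, hstail⟩ := key s
  refine ⟨N, M, hrtail, hstail, ?_⟩
  have hax : a ∉ A := fun h => by have := hKA _ h; omega
  have hbx : b ∉ A := fun h => by have := hKA _ h; omega
  have step1 : (dominatedDoubleRay.eDel F).Adj (some a) none := by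
    refine ⟨ddr_adj.mpr ⟨by simp, Or.inr (Or.inr (Or.inr rfl))⟩, ?_⟩
    rw [Sym2.eq_swap]
    exact hax
  have step2 : (dominatedDoubleRay.eDel F).Adj none (some b) := by
    exact ⟨ddr_adj.mpr ⟨by simp, Or.inr (Or.inr (Or.inl rfl))⟩, hbx⟩
  rw [hra, hsb]
  exact step1.reachable.trans step2.reachable

/-- this graph has exactly two ends but exactly one edge-end. -/
theorem dominatedDoubleRay_two_ends_one_edgeEnd :
    (∃ r s : GraphRay dominatedDoubleRay,
      ¬ endEquiv dominatedDoubleRay r s ∧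
      ∀ t : GraphRay dominatedDoubleRay,
        endEquiv dominatedDoubleRay t r ∨ endEquiv dominatedDoubleRay t s) ∧
    (Nonempty (GraphRay dominatedDoubleRay) ∧
      ∀ r s : GraphRay dominatedDoubleRay, edgeEndEquiv dominatedDoubleRay r s) := by
  constructor
  · refine ⟨rayR, rayS, not_endEquiv_rayR_rayS, fun t => ?_⟩
    rcases tail_structure t with ⟨N₀, c, ht⟩ | ⟨N₀, c, ht⟩
    · exact Or.inl (endEquiv_of_inc t N₀ c ht)
    · exact Or.inr (endEquiv_of_dec t N₀ c ht)
  · exact ⟨⟨rayR⟩, edgeEndEquiv_all⟩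
end

section
/- For every graph G there is a graph H (obtained by expanding each ray-edge-dominating vertex v to a complete graph on d(v) vertices, with each edge formerly incident to v attached to a distinct vertex of the clique) such that the edge-end space Ω_E(G) is homeomorphic to the end space Ω(H); moreover, every vertex of H edge-dominates at most one end of H. -/
open SimpleGraph

universe u

section Toolbox

open GraphRay

variable {V : Type u} {G : SimpleGraph V}

lemma GraphRay.exists_tail_avoid (r : GraphRay G) {S : Set V} (hS : S.Finite) :
    ∃ N, ∀ n, N ≤ n → r.f n ∉ S := by
  have hfin : {n | r.f n ∈ S}.Finite := Set.Finite.preimage r.inj.injOn hS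
  obtain ⟨N, hN⟩ := hfin.bddAbove
  exact ⟨N + 1, fun n hn hmem => by have := hN hmem; omega⟩

lemma GraphRay.edge_inj (r : GraphRay G) {m n : ℕ}
    (h : s(r.f m, r.f (m + 1)) = s(r.f n, r.f (n + 1))) : m = n := by
  rw [Sym2.eq_iff] at h
  rcases h with ⟨h1, _⟩ | ⟨h1, h2⟩
  · exact r.inj h1
  · have := r.inj h1; have := r.inj h2; omega

lemma GraphRay.exists_tail_avoid_edges (r : GraphRay G) {F : Set (Sym2 V)} (hF : F.Finite) :
    ∃ N, ∀ n, N ≤ n → s(r.f n, r.f (n + 1)) ∉ F := by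
  have hfin : {n | s(r.f n, r.f (n + 1)) ∈ F}.Finite :=
    Set.Finite.preimage (fun a _ b _ h => r.edge_inj h) hF
  obtain ⟨N, hN⟩ := hfin.bddAbove
  exact ⟨N + 1, fun n hn hmem => by have := hN hmem; omega⟩

lemma GraphRay.reachable_tail_vDel (r : GraphRay G) {S : Set V} {N L : ℕ} (h : N ≤ L)
    (hav : ∀ n, N ≤ n → r.f n ∉ S) : (G.vDel S).Reachable (r.f N) (r.f L) := by
  induction L, h using Nat.le_induction with
  | base => exact Reachable.refl _
  | succ L hNL ih =>
    exact ih.trans ⟨Walk.cons ⟨r.adj L, hav L hNL, hav (L + 1) (by omega)⟩ Walk.nil⟩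

lemma GraphRay.reachable_tail_eDel (r : GraphRay G) {F : Set (Sym2 V)} {N L : ℕ} (h : N ≤ L)
    (hav : ∀ n, N ≤ n → s(r.f n, r.f (n + 1)) ∉ F) :
    (G.eDel F).Reachable (r.f N) (r.f L) := by
  induction L, h using Nat.le_induction with
  | base => exact Reachable.refl _
  | succ L hNL ih =>
    exact ih.trans ⟨Walk.cons ⟨r.adj L, hav L hNL⟩ Walk.nil⟩

lemma GraphRay.VConn.refl' {S : Set V} (hS : S.Finite) (r : GraphRay G) : VConn G S r r := by
  obtain ⟨N, hN⟩ := r.exists_tail_avoid hS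
  exact ⟨N, N, hN, hN, Reachable.refl _⟩

lemma GraphRay.VConn.symm' {S : Set V} {r s : GraphRay G} (h : VConn G S r s) :
    VConn G S s r := by
  obtain ⟨N, M, ha, hb, hr⟩ := h
  exact ⟨M, N, hb, ha, hr.symm⟩

lemma GraphRay.VConn.trans' {S : Set V} {r s t : GraphRay G} (h1 : VConn G S r s)
    (h2 : VConn G S s t) : VConn G S r t := by
  obtain ⟨N1, M1, ha, hb, hr⟩ := h1
  obtain ⟨N2, M2, hb', hc, hr'⟩ := h2
  refine ⟨N1, M2, ha, hc, hr.trans (Reachable.trans ?_ hr')⟩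
  exact (s.reachable_tail_vDel (le_max_left M1 N2) hb).trans
    (s.reachable_tail_vDel (le_max_right M1 N2) hb').symm

lemma GraphRay.EConn.refl' {F : Set (Sym2 V)} (hF : F.Finite) (r : GraphRay G) :
    EConn G F r r := by
  obtain ⟨N, hN⟩ := r.exists_tail_avoid_edges hF
  exact ⟨N, N, hN, hN, Reachable.refl _⟩

lemma GraphRay.EConn.symm' {F : Set (Sym2 V)} {r s : GraphRay G} (h : EConn G F r s) :
    EConn G F s r := by
  obtain ⟨N, M, ha, hb, hr⟩ := h
  exact ⟨M, N, hb, ha, hr.symm⟩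

lemma GraphRay.EConn.trans' {F : Set (Sym2 V)} {r s t : GraphRay G} (h1 : EConn G F r s)
    (h2 : EConn G F s t) : EConn G F r t := by
  obtain ⟨N1, M1, ha, hb, hr⟩ := h1
  obtain ⟨N2, M2, hb', hc, hr'⟩ := h2
  refine ⟨N1, M2, ha, hc, hr.trans (Reachable.trans ?_ hr')⟩
  exact (s.reachable_tail_eDel (le_max_left M1 N2) hb).trans
    (s.reachable_tail_eDel (le_max_right M1 N2) hb').symm

lemma endEquiv_equivalence : Equivalence (endEquiv G) where
  refl r := fun S hS => VConn.refl' hS r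
  symm h := fun S hS => (h S hS).symm'
  trans h1 h2 := fun S hS => (h1 S hS).trans' (h2 S hS)

lemma edgeEndEquiv_equivalence : Equivalence (edgeEndEquiv G) where
  refl r := fun F hF _ => EConn.refl' hF r
  symm h := fun F hF hsub => (h F hF hsub).symm'
  trans h1 h2 := fun F hF hsub => (h1 F hF hsub).trans' (h2 F hF hsub)

lemma edgeVerts_finite {F : Set (Sym2 V)} (hF : F.Finite) : {v | ∃ e ∈ F, v ∈ e}.Finite := by
  have : {v | ∃ e ∈ F, v ∈ e} = ⋃ e ∈ F, {v | v ∈ e} := by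
    ext v; simp
  rw [this]
  refine Set.Finite.biUnion hF (fun e _ => ?_)
  induction e using Sym2.ind with
  | _ a b =>
    refine Set.Finite.subset ((Set.finite_singleton b).insert a) ?_
    intro v hv
    rcases Sym2.mem_iff.mp hv with h | h <;> simp [h]

noncomputable def walk_vDel_to_eDel {F : Set (Sym2 V)} {u v : V} :
    (G.vDel {x | ∃ e ∈ F, x ∈ e}).Walk u v → (G.eDel F).Walk u v := by
  intro p
  induction p with
  | nil => exact Walk.nil
  | cons h p ih =>
    exact Walk.cons ⟨h.1, fun hmem => h.2.1 ⟨_, hmem, Sym2.mem_mk_left _ _⟩⟩ ih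

lemma endEquiv_to_edgeEndEquiv {r s : GraphRay G} (h : endEquiv G r s) :
    edgeEndEquiv G r s := by
  intro F hF _
  obtain ⟨N, M, ha, hb, hr⟩ := h {v | ∃ e ∈ F, v ∈ e} (edgeVerts_finite hF)
  refine ⟨N, M, fun n hn he => ha n hn ⟨_, he, Sym2.mem_mk_left _ _⟩,
    fun m hm he => hb m hm ⟨_, he, Sym2.mem_mk_left _ _⟩, ?_⟩
  exact hr.elim fun p => ⟨walk_vDel_to_eDel p⟩

lemma eDel_anti {F F' : Set (Sym2 V)} (h : F ⊆ F') : G.eDel F' ≤ G.eDel F :=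
  fun _ _ ha => ⟨ha.1, fun hm => ha.2 (h hm)⟩

end Toolbox


section Construction

open GraphRay

variable {V : Type u} (G : SimpleGraph V)

/-- Vertices that edge-dominate some ray. -/
def Dset : Set V := {v | ∃ r : GraphRay G, edgeDominates G v r}

open Classical in
/-- Attachment point of the edge from `v` towards `w`. -/
noncomputable def repv (v w : V) : V := if v ∈ Dset G then w else v

lemma repv_mem {v : V} (h : v ∈ Dset G) (w : V) : repv G v w = w := if_pos h

lemma repv_not {v : V} (h : v ∉ Dset G) (w : V) : repv G v w = v := if_neg h

/-- The clique expansion of `G` at its edge-dominating vertices. -/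
def Hgraph : SimpleGraph (V × V) where
  Adj p q := (p.1 = q.1 ∧ p.1 ∈ Dset G ∧ p.2 ≠ q.2) ∨
    (G.Adj p.1 q.1 ∧ p.2 = repv G p.1 q.1 ∧ q.2 = repv G q.1 p.1)
  symm := ⟨by
    rintro p q (⟨h1, h2, h3⟩ | ⟨h1, h2, h3⟩)
    · exact Or.inl ⟨h1.symm, h1 ▸ h2, h3.symm⟩
    · exact Or.inr ⟨h1.symm, h3, h2⟩⟩
  loopless := ⟨by
    rintro p (⟨_, _, h3⟩ | ⟨h1, _, _⟩)
    · exact h3 rfl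
    · exact G.loopless.irrefl _ h1⟩

lemma Hadj_G {x y : V} (h : G.Adj x y) :
    (Hgraph G).Adj (x, repv G x y) (y, repv G y x) := Or.inr ⟨h, rfl, rfl⟩

lemma Hadj_clique {v a b : V} (h : v ∈ Dset G) (hne : a ≠ b) :
    (Hgraph G).Adj (v, a) (v, b) := Or.inl ⟨rfl, h, hne⟩

lemma Hadj_nonisolated {p q : V × V} (h : (Hgraph G).Adj p q) (hnd : p.1 ∉ Dset G) :
    p.2 = p.1 := by
  rcases h with ⟨_, h2, _⟩ | ⟨_, h2, _⟩
  · exact absurd h2 hnd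
  · rw [h2, repv_not G hnd]

lemma Hadj_fst {p q : V × V} (h : (Hgraph G).Adj p q) : p.1 = q.1 ∨ G.Adj p.1 q.1 := by
  rcases h with ⟨h1, _, _⟩ | ⟨h1, _, _⟩
  · exact Or.inl h1
  · exact Or.inr h1

lemma clique_reach {v a b : V} (hD : v ∈ Dset G) {S : Set (V × V)}
    (ha : (v, a) ∉ S) (hb : (v, b) ∉ S) :
    ((Hgraph G).vDel S).Reachable (v, a) (v, b) := by
  by_cases h : a = b
  · subst h; exact Reachable.refl _
  · exact ⟨Walk.cons ⟨Hadj_clique G hD (fun hh => h hh), ha, hb⟩ Walk.nil⟩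

variable (r : GraphRay G)

noncomputable def exitV (k : ℕ) : V × V := (r.f k, repv G (r.f k) (r.f (k + 1)))

noncomputable def enterV (k : ℕ) : V × V :=
  if k = 0 then exitV G r 0 else (r.f k, repv G (r.f k) (r.f (k - 1)))

noncomputable def aSeq (n : ℕ) : V × V :=
  if n % 2 = 1 then exitV G r (n / 2) else enterV G r (n / 2)

lemma enterV_fst (k : ℕ) : (enterV G r k).1 = r.f k := by
  unfold enterV exitV
  split <;> simp_all

lemma aSeq_fst (n : ℕ) : (aSeq G r n).1 = r.f (n / 2) := by
  unfold aSeq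
  split
  · rfl
  · exact enterV_fst G r _

lemma aSeq_even (k : ℕ) : aSeq G r (2 * k) = enterV G r k := by
  unfold aSeq; norm_num [Nat.mul_div_cancel_left, Nat.mul_mod_right]

lemma aSeq_odd (k : ℕ) : aSeq G r (2 * k + 1) = exitV G r k := by
  unfold aSeq
  have h1 : (2 * k + 1) % 2 = 1 := by omega
  have h2 : (2 * k + 1) / 2 = k := by omega
  rw [if_pos h1, h2]

lemma aSeq_step (n : ℕ) :
    aSeq G r (n + 1) = aSeq G r n ∨ (Hgraph G).Adj (aSeq G r n) (aSeq G r (n + 1)) := by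
  rcases Nat.even_or_odd n with ⟨k, hk⟩ | ⟨k, hk⟩
  · -- n = 2k : enter k to exit k
    have hn : n = 2 * k := by omega
    subst hn
    rw [aSeq_even, show 2 * k + 1 = 2 * k + 1 from rfl, aSeq_odd]
    rcases Nat.eq_zero_or_pos k with hk0 | hkpos
    · subst hk0; left; unfold enterV; simp
    · by_cases hD : r.f k ∈ Dset G
      · right
        unfold enterV exitV
        rw [if_neg (by omega : ¬ k = 0)]
        refine Hadj_clique G hD ?_
        rw [repv_mem G hD, repv_mem G hD]
        intro hh
        have := r.inj hh
        omega
      · left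
        unfold enterV exitV
        rw [if_neg (by omega : ¬ k = 0), repv_not G hD, repv_not G hD]
  · -- n = 2k+1 : exit k to enter (k+1)
    have hn : n = 2 * k + 1 := by omega
    subst hn
    right
    have h2 : 2 * k + 1 + 1 = 2 * (k + 1) := by ring
    rw [aSeq_odd, h2, aSeq_even]
    unfold exitV enterV
    rw [if_neg (Nat.succ_ne_zero k)]
    simpa using Hadj_G G (r.adj k)

lemma aSeq_stutter_even {n : ℕ} (h : aSeq G r (n + 1) = aSeq G r n) : n % 2 = 0 := by
  by_contra hodd
  have h1 : (aSeq G r (n + 1)).1 = (aSeq G r n).1 := by rw [h]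
  rw [aSeq_fst, aSeq_fst] at h1
  have := r.inj h1
  omega

lemma aSeq_jump {n : ℕ} (h : aSeq G r (n + 1) = aSeq G r n) :
    (Hgraph G).Adj (aSeq G r n) (aSeq G r (n + 2)) := by
  have heven := aSeq_stutter_even G r h
  rcases aSeq_step G r (n + 1) with heq | hadj
  · exfalso
    have h1 : (aSeq G r (n + 2)).1 = (aSeq G r (n + 1)).1 := by rw [heq]
    rw [aSeq_fst, aSeq_fst] at h1
    have := r.inj h1
    omega
  · rw [h] at hadj
    exact hadj

noncomputable def idxf : ℕ → ℕ
  | 0 => 0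
  | n + 1 =>
    haveI := Classical.dec (aSeq G r (idxf n + 1) = aSeq G r (idxf n))
    if aSeq G r (idxf n + 1) = aSeq G r (idxf n) then idxf n + 2 else idxf n + 1

lemma idxf_succ_cases (n : ℕ) :
    (aSeq G r (idxf G r n + 1) = aSeq G r (idxf G r n) ∧ idxf G r (n + 1) = idxf G r n + 2) ∨
    (aSeq G r (idxf G r n + 1) ≠ aSeq G r (idxf G r n) ∧ idxf G r (n + 1) = idxf G r n + 1) := by
  by_cases h : aSeq G r (idxf G r n + 1) = aSeq G r (idxf G r n)
  · left; exact ⟨h, by simp [idxf, h]⟩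
  · right; exact ⟨h, by simp [idxf, h]⟩

lemma idxf_strictMono : StrictMono (idxf G r) := by
  apply strictMono_nat_of_lt_succ
  intro n
  rcases idxf_succ_cases G r n with ⟨_, h⟩ | ⟨_, h⟩ <;> omega

lemma idxf_ge (n : ℕ) : n ≤ idxf G r n := (idxf_strictMono G r).le_apply

lemma idxf_le (n : ℕ) : idxf G r n ≤ 2 * n := by
  induction n with
  | zero => simp [idxf]
  | succ n ih => rcases idxf_succ_cases G r n with ⟨_, h⟩ | ⟨_, h⟩ <;> omega

lemma phi_adj (n : ℕ) :
    (Hgraph G).Adj (aSeq G r (idxf G r n)) (aSeq G r (idxf G r (n + 1))) := by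
  rcases idxf_succ_cases G r n with ⟨h, he⟩ | ⟨h, he⟩
  · rw [he]
    exact aSeq_jump G r h
  · rw [he]
    rcases aSeq_step G r (idxf G r n) with heq | hadj
    · exact absurd heq h
    · exact hadj

lemma aSeq_block {m n : ℕ} (h : aSeq G r m = aSeq G r n) : m / 2 = n / 2 := by
  have h1 : (aSeq G r m).1 = (aSeq G r n).1 := by rw [h]
  rw [aSeq_fst, aSeq_fst] at h1
  exact r.inj h1

lemma phi_inj : Function.Injective (fun n => aSeq G r (idxf G r n)) := by
  have key : ∀ m n, m < n → aSeq G r (idxf G r m) ≠ aSeq G r (idxf G r n) := by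
    intro m n hmn heq
    have hblock := aSeq_block G r heq
    have hlt : idxf G r m < idxf G r n := idxf_strictMono G r hmn
    have hstep : idxf G r n = idxf G r m + 1 := by omega
    have hst : aSeq G r (idxf G r m + 1) = aSeq G r (idxf G r m) := by
      rw [← hstep, heq]
    rcases idxf_succ_cases G r m with ⟨_, h2⟩ | ⟨hne, _⟩
    · have hmono : idxf G r (m + 1) ≤ idxf G r n := (idxf_strictMono G r).monotone hmn
      omega
    · exact hne hst
  intro m n heq
  rcases lt_trichotomy m n with h | h | h
  · exact absurd heq (key m n h)
  · exact h
  · exact absurd heq.symm (key n m h)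

/-- The image ray in the clique expansion. -/
noncomputable def phi : GraphRay (Hgraph G) where
  f n := aSeq G r (idxf G r n)
  inj := phi_inj G r
  adj := phi_adj G r

lemma phi_fst (n : ℕ) : ((phi G r).f n).1 = r.f (idxf G r n / 2) := aSeq_fst G r _

lemma evens_hit (k : ℕ) : ∃ p, idxf G r p = 2 * k := by
  induction k with
  | zero => exact ⟨0, rfl⟩
  | succ k ih =>
    obtain ⟨p, hp⟩ := ih
    rcases idxf_succ_cases G r p with ⟨_, h⟩ | ⟨_, h⟩
    · exact ⟨p + 1, by omega⟩
    · -- idxf (p+1) = 2k+1, odd so no stutter there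
      rcases idxf_succ_cases G r (p + 1) with ⟨hst, h2⟩ | ⟨_, h2⟩
      · exfalso
        have := aSeq_stutter_even G r hst
        omega
      · exact ⟨p + 1 + 1, by omega⟩

noncomputable def phiPos (k : ℕ) : ℕ := (evens_hit G r k).choose

lemma phiPos_spec (k : ℕ) : idxf G r (phiPos G r k) = 2 * k := (evens_hit G r k).choose_spec

lemma phiPos_ge (k : ℕ) : k ≤ phiPos G r k := by
  have h1 := phiPos_spec G r k
  have h2 := idxf_le G r (phiPos G r k)
  omega

lemma phi_f_phiPos (k : ℕ) : (phi G r).f (phiPos G r k) = enterV G r k := by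
  show aSeq G r (idxf G r (phiPos G r k)) = _
  rw [phiPos_spec, aSeq_even]

lemma exit_hit (k : ℕ) : ∃ p, k ≤ p ∧ (phi G r).f p = exitV G r k := by
  by_cases h : aSeq G r (2 * k + 1) = aSeq G r (2 * k)
  · refine ⟨phiPos G r k, phiPos_ge G r k, ?_⟩
    rw [phi_f_phiPos, ← aSeq_even, ← h, aSeq_odd]
  · refine ⟨phiPos G r k + 1, by have := phiPos_ge G r k; omega, ?_⟩
    show aSeq G r (idxf G r (phiPos G r k + 1)) = _
    rcases idxf_succ_cases G r (phiPos G r k) with ⟨hst, _⟩ | ⟨_, h2⟩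
    · rw [phiPos_spec] at hst
      exact absurd hst h
    · rw [h2, phiPos_spec, aSeq_odd]

end Construction


section Transfer

open GraphRay

variable {V : Type u} (G : SimpleGraph V)

lemma not_edgeDominates_sep {x : V} (hx : x ∉ Dset G) (a : GraphRay G) :
    ∃ F : Set (Sym2 V), F.Finite ∧ F ⊆ G.edgeSet ∧
      ∀ N, (∀ n, N ≤ n → s(a.f n, a.f (n + 1)) ∉ F) → ¬ (G.eDel F).Reachable x (a.f N) := by
  by_contra h
  push_neg at h
  exact hx ⟨a, h⟩

noncomputable def Fsep {x : V} (hx : x ∉ Dset G) (a : GraphRay G) : Set (Sym2 V) :=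
  (not_edgeDominates_sep G hx a).choose

lemma Fsep_finite {x : V} (hx : x ∉ Dset G) (a : GraphRay G) : (Fsep G hx a).Finite :=
  (not_edgeDominates_sep G hx a).choose_spec.1

lemma Fsep_sub {x : V} (hx : x ∉ Dset G) (a : GraphRay G) : Fsep G hx a ⊆ G.edgeSet :=
  (not_edgeDominates_sep G hx a).choose_spec.2.1

lemma Fsep_spec {x : V} (hx : x ∉ Dset G) (a : GraphRay G) :
    ∀ N, (∀ n, N ≤ n → s(a.f n, a.f (n + 1)) ∉ Fsep G hx a) →
      ¬ (G.eDel (Fsep G hx a)).Reachable x (a.f N) :=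
  (not_edgeDominates_sep G hx a).choose_spec.2.2

/-- Vertices of `H` of the form `(x,x)` with `x` not edge-dominating. -/
def BadS (S : Set (V × V)) : Set V := {x | x ∉ Dset G ∧ (x, x) ∈ S}

lemma BadS_finite {S : Set (V × V)} (hS : S.Finite) : (BadS G S).Finite := by
  have h1 : {x : V | (x, x) ∈ S}.Finite :=
    Set.Finite.preimage (fun x _ y _ h => congrArg Prod.fst h) hS
  exact h1.subset (fun x hx => hx.2)

/-- Edges of `G` recorded in a vertex set of `H`. -/
def SEdges (S : Set (V × V)) : Set (Sym2 V) :=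
  {e | ∃ p ∈ S, G.Adj p.1 p.2 ∧ e = s(p.1, p.2)}

lemma SEdges_finite {S : Set (V × V)} (hS : S.Finite) : (SEdges G S).Finite := by
  refine (hS.image (fun p => s(p.1, p.2))).subset ?_
  rintro e ⟨p, hp, _, rfl⟩
  exact ⟨p, hp, rfl⟩

lemma SEdges_sub (S : Set (V × V)) : SEdges G S ⊆ G.edgeSet := by
  rintro e ⟨p, _, hadj, rfl⟩
  exact hadj

/-- The edge set of `G` corresponding to a finite vertex set of `H` (relative to a ray `a`). -/
noncomputable def FofS (S : Set (V × V)) (a : GraphRay G) : Set (Sym2 V) :=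
  SEdges G S ∪ ⋃ (x : V) (hx : x ∈ BadS G S), Fsep G hx.1 a

lemma FofS_finite {S : Set (V × V)} (hS : S.Finite) (a : GraphRay G) :
    (FofS G S a).Finite := by
  refine (SEdges_finite G hS).union ?_
  have : (⋃ (x : V) (hx : x ∈ BadS G S), Fsep G hx.1 a) =
      ⋃ (x : (BadS G S)), Fsep G x.2.1 a := by
    ext e; simp only [Set.mem_iUnion, Subtype.exists]
  rw [this]
  haveI : Finite (BadS G S) := (BadS_finite G hS).to_subtype
  exact Set.finite_iUnion (fun x => Fsep_finite G x.2.1 a)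

lemma FofS_sub (S : Set (V × V)) (a : GraphRay G) : FofS G S a ⊆ G.edgeSet := by
  refine Set.union_subset (SEdges_sub G S) ?_
  refine Set.iUnion_subset fun x => Set.iUnion_subset fun hx => Fsep_sub G hx.1 a

lemma Fsep_sub_FofS {S : Set (V × V)} {x : V} (hx : x ∈ BadS G S) (a : GraphRay G) :
    Fsep G hx.1 a ⊆ FofS G S a := by
  refine Set.subset_union_of_subset_right ?_ _
  exact Set.subset_iUnion₂ (s := fun x hx => Fsep G hx.1 a) x hx

lemma walk_avoid_bad {S : Set (V × V)} {F : Set (Sym2 V)} {a : GraphRay G} {L : ℕ}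
    (hFS : ∀ x, ∀ hx : x ∈ BadS G S, Fsep G hx.1 a ⊆ F)
    (htail : ∀ n, L ≤ n → s(a.f n, a.f (n + 1)) ∉ F)
    {v : V} (w : (G.eDel F).Walk (a.f L) v) :
    ∀ x ∈ w.support, x ∉ BadS G S := by
  intro x hx hbad
  obtain ⟨q, q', _⟩ := Walk.mem_support_iff_exists_append.mp hx
  have hre : (G.eDel (Fsep G hbad.1 a)).Reachable x (a.f L) :=
    Reachable.mono (eDel_anti (hFS x hbad)) ⟨q.reverse⟩
  exact Fsep_spec G hbad.1 a L (fun n hn hm => htail n hn (hFS x hbad hm)) hre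

lemma repv_step_notmem {S : Set (V × V)} {F : Set (Sym2 V)} (hSE : SEdges G S ⊆ F)
    {u y : V} (hadj : G.Adj u y) (hF : s(u, y) ∉ F) (hbad : u ∉ BadS G S) :
    (u, repv G u y) ∉ S := by
  intro hmem
  by_cases hD : u ∈ Dset G
  · rw [repv_mem G hD] at hmem
    exact hF (hSE ⟨(u, y), hmem, hadj, rfl⟩)
  · rw [repv_not G hD] at hmem
    exact hbad ⟨hD, hmem⟩

lemma repv_reach_self {S : Set (V × V)} {u c d : V}
    (hc : (u, repv G u c) ∉ S) (hd : (u, repv G u d) ∉ S) :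
    ((Hgraph G).vDel S).Reachable (u, repv G u c) (u, repv G u d) := by
  by_cases hD : u ∈ Dset G
  · simp only [repv_mem G hD] at *
    exact clique_reach G hD hc hd
  · simp only [repv_not G hD] at *
    exact Reachable.refl _

lemma walk_lift {S : Set (V × V)} {F : Set (Sym2 V)} (hSE : SEdges G S ⊆ F) :
    ∀ {u v : V} (w : (G.eDel F).Walk u v),
      (∀ x ∈ w.support, x ∉ BadS G S) → ∀ c d : V,
      (u, repv G u c) ∉ S → (v, repv G v d) ∉ S →
      ((Hgraph G).vDel S).Reachable (u, repv G u c) (v, repv G v d) := by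
  intro u v w
  induction w with
  | nil =>
    intro _ c d hc hd
    exact repv_reach_self G hc hd
  | @cons u x v h p ih =>
    intro hbad c d hc hd
    have hbadu : u ∉ BadS G S := hbad u (Walk.start_mem_support _)
    have hbadp : ∀ y ∈ p.support, y ∉ BadS G S := by
      intro y hy
      exact hbad y (by rw [Walk.support_cons]; exact List.mem_cons_of_mem _ hy)
    have hbadx : x ∉ BadS G S := hbadp x (Walk.start_mem_support _)
    have hux : (u, repv G u x) ∉ S := repv_step_notmem G hSE h.1 h.2 hbadu
    have hxu : (x, repv G x u) ∉ S := by
      refine repv_step_notmem G hSE h.1.symm (fun hm => h.2 ?_) hbadx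
      rwa [Sym2.eq_swap] at hm
    have step1 := repv_reach_self G (u := u) (c := c) (d := x) hc hux
    have step2 : ((Hgraph G).vDel S).Reachable (u, repv G u x) (x, repv G x u) :=
      ⟨Walk.cons ⟨Hadj_G G h.1, hux, hxu⟩ Walk.nil⟩
    exact (step1.trans step2).trans (ih hbadp u d hxu hd)

lemma lift_conn {S : Set (V × V)} (hS : S.Finite) (a b : GraphRay G)
    (h : EConn G (FofS G S a) a b) : VConn (Hgraph G) S (phi G a) (phi G b) := by
  obtain ⟨N, M, hta, htb, hreach⟩ := h
  obtain ⟨Na, hNa⟩ := (phi G a).exists_tail_avoid hS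
  obtain ⟨Nb, hNb⟩ := (phi G b).exists_tail_avoid hS
  set F := FofS G S a with hF
  set La := max N Na with hLa
  set Lb := max M Nb with hLb
  have hta' : ∀ n, La ≤ n → s(a.f n, a.f (n + 1)) ∉ F :=
    fun n hn => hta n (le_trans (le_max_left _ _) hn)
  have htb' : ∀ n, Lb ≤ n → s(b.f n, b.f (n + 1)) ∉ F :=
    fun n hn => htb n (le_trans (le_max_left _ _) hn)
  have hra : (G.eDel F).Reachable (a.f La) (b.f Lb) :=
    ((a.reachable_tail_eDel (le_max_left N Na) hta).symm.trans hreach).trans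
      (b.reachable_tail_eDel (le_max_left M Nb) htb)
  obtain ⟨w⟩ := hra
  have hbad : ∀ x ∈ w.support, x ∉ BadS G S :=
    walk_avoid_bad G (fun x hx => Fsep_sub_FofS G hx a) hta' w
  obtain ⟨pa, hpage, hpa⟩ := exit_hit G a La
  obtain ⟨pb, hpbge, hpb⟩ := exit_hit G b Lb
  have hpaS : (phi G a).f pa ∉ S := hNa pa (le_trans (le_max_right N Na) hpage)
  have hpbS : (phi G b).f pb ∉ S := hNb pb (le_trans (le_max_right M Nb) hpbge)
  refine ⟨pa, pb, fun n hn => hNa n (le_trans (le_trans (le_max_right N Na) hpage) hn),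
    fun m hm => hNb m (le_trans (le_trans (le_max_right M Nb) hpbge) hm), ?_⟩
  rw [hpa, hpb]
  rw [hpa] at hpaS
  rw [hpb] at hpbS
  exact walk_lift G Set.subset_union_left w hbad (a.f (La + 1)) (b.f (Lb + 1)) hpaS hpbS

/-- Pairs recording edges of `F`. -/
def liftPairs (F : Set (Sym2 V)) : Set (V × V) := {q | s(q.1, q.2) ∈ F}

lemma liftPairs_finite {F : Set (Sym2 V)} (hF : F.Finite) : (liftPairs F).Finite := by
  have hsub : liftPairs F ⊆ ⋃ e ∈ F, {q : V × V | s(q.1, q.2) = e} := by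
    intro q hq
    exact Set.mem_biUnion hq rfl
  refine Set.Finite.subset (Set.Finite.biUnion hF (fun e _ => ?_)) hsub
  induction e using Sym2.ind with
  | _ x y =>
    refine Set.Finite.subset (Set.finite_singleton (x, y) |>.insert (y, x)) ?_
    rintro ⟨u1, u2⟩ hu
    simp only [Set.mem_setOf_eq, Sym2.eq_iff] at hu
    rcases hu with ⟨rfl, rfl⟩ | ⟨rfl, rfl⟩
    · simp
    · simp

/-- The vertex set of `H` corresponding to a finite edge set of `G`. -/
noncomputable def SofF (F : Set (Sym2 V)) : Set (V × V) :=
  (fun q : V × V => (q.1, repv G q.1 q.2)) '' liftPairs F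

lemma SofF_finite {F : Set (Sym2 V)} (hF : F.Finite) : (SofF G F).Finite :=
  (liftPairs_finite hF).image _

lemma walk_proj {F : Set (Sym2 V)} :
    ∀ {p q : V × V}, ((Hgraph G).vDel (SofF G F)).Walk p q →
      (G.eDel F).Reachable p.1 q.1 := by
  intro p q w
  induction w with
  | nil => exact Reachable.refl _
  | @cons p p' q h w ih =>
    rcases h.1 with ⟨h1, _, _⟩ | ⟨hadj, hp2, _⟩
    · exact h1 ▸ ih
    · have hFe : s(p.1, p'.1) ∉ F := by
        intro hmem
        exact h.2.1 ⟨(p.1, p'.1), hmem, by show (p.1, repv G p.1 p'.1) = p; rw [← hp2]⟩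
      exact (Reachable.trans ⟨Walk.cons ⟨hadj, hFe⟩ Walk.nil⟩ ih)

lemma proj_conn {F : Set (Sym2 V)} (hF : F.Finite) (a b : GraphRay G)
    (h : VConn (Hgraph G) (SofF G F) (phi G a) (phi G b)) : EConn G F a b := by
  obtain ⟨N', M', ha', hb', hr⟩ := h
  obtain ⟨Na, hNa⟩ := a.exists_tail_avoid_edges hF
  obtain ⟨Nb, hNb⟩ := b.exists_tail_avoid_edges hF
  set P := max N' (2 * Na) with hP
  set Q := max M' (2 * Nb) with hQ
  have hra : ((Hgraph G).vDel (SofF G F)).Reachable ((phi G a).f P) ((phi G b).f Q) :=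
    (((phi G a).reachable_tail_vDel (le_max_left _ _) ha').symm.trans hr).trans
      ((phi G b).reachable_tail_vDel (le_max_left _ _) hb')
  obtain ⟨w⟩ := hra
  have hproj := walk_proj G w
  rw [phi_fst, phi_fst] at hproj
  have hKa : Na ≤ idxf G a P / 2 := by
    have h1 := idxf_ge G a P
    have h2 : 2 * Na ≤ P := le_max_right _ _
    omega
  have hKb : Nb ≤ idxf G b Q / 2 := by
    have h1 := idxf_ge G b Q
    have h2 : 2 * Nb ≤ Q := le_max_right _ _
    omega
  exact ⟨Na, Nb, hNa, hNb,
    (a.reachable_tail_eDel hKa hNa).trans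
      (hproj.trans (b.reachable_tail_eDel hKb hNb).symm)⟩

end Transfer


section LiftE

open GraphRay

variable {V : Type u} (G : SimpleGraph V)

/-- The edge set of `H` lying over a set of edges of `G`. -/
def liftE (F : Set (Sym2 V)) : Set (Sym2 (V × V)) :=
  {e' | e' ∈ (Hgraph G).edgeSet ∧ Sym2.map Prod.fst e' ∈ F}

lemma liftE_sub (F : Set (Sym2 V)) : liftE G F ⊆ (Hgraph G).edgeSet := fun _ h => h.1

lemma liftE_finite {F : Set (Sym2 V)} (hF : F.Finite) (hsub : F ⊆ G.edgeSet) :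
    (liftE G F).Finite := by
  have hsub2 : liftE G F ⊆
      (fun q : V × V => s((q.1, repv G q.1 q.2), (q.2, repv G q.2 q.1))) '' liftPairs F := by
    intro e' he'
    induction e' using Sym2.ind with
    | _ p q =>
      obtain ⟨hedge, hf⟩ := he'
      rw [SimpleGraph.mem_edgeSet] at hedge
      rw [Sym2.map_pair_eq] at hf
      rcases hedge with ⟨h1, _, _⟩ | ⟨hadj, hp2, hq2⟩
      · exfalso; rw [h1] at hf; exact G.loopless.irrefl q.1 (hsub hf)
      · refine ⟨(p.1, q.1), hf, ?_⟩
        show s((p.1, repv G p.1 q.1), (q.1, repv G q.1 p.1)) = s(p, q)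
        rw [← hp2, ← hq2]
  exact ((liftPairs_finite hF).image _).subset hsub2

lemma walk_projE {F : Set (Sym2 V)} :
    ∀ {p q : V × V}, ((Hgraph G).eDel (liftE G F)).Walk p q →
      (G.eDel F).Reachable p.1 q.1 := by
  intro p q w
  induction w with
  | nil => exact Reachable.refl _
  | @cons p p' q h w ih =>
    rcases h.1 with ⟨h1, _, _⟩ | ⟨hadj, _, _⟩
    · exact h1 ▸ ih
    · have hFe : s(p.1, p'.1) ∉ F := by
        intro hmem
        exact h.2 ⟨((Hgraph G).mem_edgeSet).mpr h.1, by rw [Sym2.map_pair_eq]; exact hmem⟩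
      exact Reachable.trans ⟨Walk.cons ⟨hadj, hFe⟩ Walk.nil⟩ ih

lemma projE_conn {F : Set (Sym2 V)} (hF : F.Finite) (a b : GraphRay G)
    (h : EConn (Hgraph G) (liftE G F) (phi G a) (phi G b)) : EConn G F a b := by
  obtain ⟨N', M', ha', hb', hr⟩ := h
  obtain ⟨Na, hNa⟩ := a.exists_tail_avoid_edges hF
  obtain ⟨Nb, hNb⟩ := b.exists_tail_avoid_edges hF
  set P := max N' (2 * Na) with hP
  set Q := max M' (2 * Nb) with hQ
  have hra : ((Hgraph G).eDel (liftE G F)).Reachable ((phi G a).f P) ((phi G b).f Q) :=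
    (((phi G a).reachable_tail_eDel (le_max_left _ _) ha').symm.trans hr).trans
      ((phi G b).reachable_tail_eDel (le_max_left _ _) hb')
  obtain ⟨w⟩ := hra
  have hproj := walk_projE G w
  rw [phi_fst, phi_fst] at hproj
  have hKa : Na ≤ idxf G a P / 2 := by
    have h1 := idxf_ge G a P
    have h2 : 2 * Na ≤ P := le_max_right _ _
    omega
  have hKb : Nb ≤ idxf G b Q / 2 := by
    have h1 := idxf_ge G b Q
    have h2 : 2 * Nb ≤ Q := le_max_right _ _
    omega
  exact ⟨Na, Nb, hNa, hNb,
    (a.reachable_tail_eDel hKa hNa).trans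
      (hproj.trans (b.reachable_tail_eDel hKb hNb).symm)⟩

end LiftE

section Surjectivity

open GraphRay

variable {V : Type u} (G : SimpleGraph V)

lemma ray_vertex_form (r' : GraphRay (Hgraph G)) (n : ℕ) (hnd : (r'.f n).1 ∉ Dset G) :
    (r'.f n).2 = (r'.f n).1 := Hadj_nonisolated G (r'.adj n) hnd

lemma surj_clique (r' : GraphRay (Hgraph G)) {v : V}
    (hinf : {n | (r'.f n).1 = v}.Infinite) :
    ∃ a : GraphRay G, endEquiv (Hgraph G) (phi G a) r' := by
  have hD : v ∈ Dset G := by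
    by_contra hnd
    obtain ⟨m, hm, n, hn, hmn⟩ := hinf.nontrivial
    have h1 : r'.f m = (v, v) := by
      have h2 := ray_vertex_form G r' m (by rw [hm]; exact hnd)
      rw [hm] at h2
      exact Prod.ext hm h2
    have h3 : r'.f n = (v, v) := by
      have h2 := ray_vertex_form G r' n (by rw [hn]; exact hnd)
      rw [hn] at h2
      exact Prod.ext hn h2
    exact hmn (r'.inj (h1.trans h3.symm))
  have hD2 := hD
  obtain ⟨a, hdom⟩ := hD2
  refine ⟨a, ?_⟩
  intro S hS
  set F := FofS G S a with hFdef
  obtain ⟨Na, hNa⟩ := (phi G a).exists_tail_avoid hS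
  obtain ⟨Nv, hNv⟩ := a.exists_tail_avoid (Set.finite_singleton v)
  obtain ⟨N, htail, hreach⟩ := hdom F (FofS_finite G hS a) (FofS_sub G S a)
  set L := max N (max Na Nv) with hLdef
  have hLN : N ≤ L := le_max_left _ _
  have htail' : ∀ n, L ≤ n → s(a.f n, a.f (n + 1)) ∉ F := fun n hn => htail n (le_trans hLN hn)
  have hreachL : (G.eDel F).Reachable v (a.f L) :=
    hreach.trans (a.reachable_tail_eDel hLN htail)
  obtain ⟨w⟩ := hreachL
  have hne : v ≠ a.f L := by
    intro h
    exact hNv L (le_trans (le_max_right _ _) (le_max_right _ _)) (by rw [← h]; rfl)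
  obtain ⟨y, hadj, p, rfl⟩ := Walk.exists_eq_cons_of_ne hne w
  have hbad : ∀ x ∈ (Walk.cons hadj p).support, x ∉ BadS G S := by
    intro x hx
    refine walk_avoid_bad G (fun x hx => Fsep_sub_FofS G hx a) htail'
      (Walk.cons hadj p).reverse (x := x) ?_
    rw [Walk.support_reverse]
    exact List.mem_reverse.mpr hx
  have hstart : (v, repv G v y) ∉ S :=
    repv_step_notmem G Set.subset_union_left hadj.1 hadj.2
      (fun hb => hb.1 hD)
  obtain ⟨pa, hpage, hpa⟩ := exit_hit G a L
  have hLNa : Na ≤ L := le_trans (le_max_left _ _) (le_max_right _ _)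
  have hend : exitV G a L ∉ S := by
    rw [← hpa]
    exact hNa pa (le_trans hLNa hpage)
  have hlift : ((Hgraph G).vDel S).Reachable (v, repv G v y) (exitV G a L) :=
    walk_lift G Set.subset_union_left (Walk.cons hadj p) hbad y (a.f (L + 1)) hstart hend
  obtain ⟨N1, hN1⟩ := r'.exists_tail_avoid hS
  obtain ⟨n, hnmem, hngt⟩ := hinf.exists_notMem_finite (Set.finite_Iic N1)
  have hnge : N1 ≤ n := by
    simp only [Set.mem_Iic, not_le] at hngt
    omega
  have htS : r'.f n ∉ S := hN1 n hnge
  have hteq : ((r'.f n).1, (r'.f n).2) = r'.f n := rfl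
  have hclique : ((Hgraph G).vDel S).Reachable (v, repv G v y) (r'.f n) := by
    have hq : ((Hgraph G).vDel S).Reachable (v, repv G v y) (v, (r'.f n).2) := by
      refine clique_reach G hD hstart ?_
      rw [show (v, (r'.f n).2) = r'.f n from by rw [← hnmem]]
      exact htS
    rwa [show (v, (r'.f n).2) = r'.f n from by rw [← hnmem]] at hq
  refine ⟨pa, N1, fun k hk => hNa k (le_trans (le_trans hLNa hpage) hk), hN1, ?_⟩
  rw [hpa]
  exact (hlift.symm.trans hclique).trans (r'.reachable_tail_vDel hnge hN1).symm

lemma surj_trail (r' : GraphRay (Hgraph G))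
    (hfin : ∀ v : V, {n | (r'.f n).1 = v}.Finite) :
    ∃ a : GraphRay G, endEquiv (Hgraph G) (phi G a) r' := by
  set g : ℕ → V := fun n => (r'.f n).1 with hg
  have hgstep : ∀ n, g n = g (n + 1) ∨ G.Adj (g n) (g (n + 1)) := fun n => Hadj_fst G (r'.adj n)
  have hex : ∀ i : ℕ, ∃ m, g m = g i ∧ i ≤ m ∧ ∀ k, m < k → g k ≠ g i := by
    intro i
    classical
    have hfin' : {m | g m = g i}.Finite := hfin (g i)
    obtain ⟨B, hB⟩ := hfin'.bddAbove
    have hmem : i ≤ B := hB (show g i = g i from rfl)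
    have hle : i ≤ B + 1 := by omega
    refine ⟨Nat.findGreatest (fun m => g m = g i) (B + 1), ?_, ?_, ?_⟩
    · exact Nat.findGreatest_spec (P := fun m => g m = g i) hle rfl
    · exact Nat.le_findGreatest hle rfl
    · intro k hk hgk
      have hkB : k ≤ B := hB hgk
      have : k ≤ Nat.findGreatest (fun m => g m = g i) (B + 1) :=
        Nat.le_findGreatest (by omega) hgk
      omega
  choose lo hlo1 hlo2 hlo3 using hex
  set nseq : ℕ → ℕ := fun k => Nat.rec (lo 0) (fun _ prev => lo (prev + 1)) k with hnseq
  have hn0 : nseq 0 = lo 0 := rfl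
  have hnsucc : ∀ k, nseq (k + 1) = lo (nseq k + 1) := fun k => rfl
  have hlast : ∀ k m, nseq k < m → g m ≠ g (nseq k) := by
    intro k
    cases k with
    | zero =>
      intro m hm heq
      rw [hn0] at hm heq
      exact hlo3 0 m hm (heq.trans (hlo1 0))
    | succ k =>
      intro m hm heq
      rw [hnsucc] at hm heq
      exact hlo3 (nseq k + 1) m hm (heq.trans (hlo1 (nseq k + 1)))
  have hnlt : ∀ k, nseq k < nseq (k + 1) := by
    intro k
    rw [hnsucc]
    exact Nat.lt_of_lt_of_le (Nat.lt_succ_self _) (hlo2 (nseq k + 1))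
  have hnmono : StrictMono nseq := strictMono_nat_of_lt_succ hnlt
  have hval : ∀ k, g (nseq (k + 1)) = g (nseq k + 1) := by
    intro k; rw [hnsucc]; exact hlo1 _
  have hadj : ∀ k, G.Adj (g (nseq k)) (g (nseq (k + 1))) := by
    intro k
    rw [hval]
    rcases hgstep (nseq k) with heq | h
    · exact absurd heq.symm (hlast k (nseq k + 1) (Nat.lt_succ_self _))
    · exact h
  have hinj : Function.Injective (fun k => g (nseq k)) := by
    have key : ∀ k l, k < l → g (nseq l) ≠ g (nseq k) :=
      fun k l hkl => hlast k (nseq l) (hnmono hkl)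
    intro k l heq
    rcases lt_trichotomy k l with h | h | h
    · exact absurd heq.symm (key k l h)
    · exact h
    · exact absurd heq (key l k h)
  set a : GraphRay G := ⟨fun k => g (nseq k), hinj, hadj⟩ with ha
  refine ⟨a, ?_⟩
  intro S hS
  obtain ⟨N1, hN1⟩ := r'.exists_tail_avoid hS
  obtain ⟨N2, hN2⟩ := (phi G a).exists_tail_avoid hS
  set k := max N2 N1 + 1 with hk
  have hk1 : N2 + 1 ≤ k := by rw [hk]; exact Nat.succ_le_succ (le_max_left _ _)
  have hk2 : N1 + 1 ≤ k := by rw [hk]; exact Nat.succ_le_succ (le_max_right _ _)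
  set p := phiPos G a k with hp
  have hpk : k ≤ p := phiPos_ge G a k
  have hppos : (phi G a).f p = enterV G a k := phi_f_phiPos G a k
  have henter : enterV G a k = (a.f k, repv G (a.f k) (a.f (k - 1))) := by
    unfold enterV
    rw [if_neg (by omega : ¬ k = 0)]
  have hkN1 : N1 ≤ nseq k := le_trans (Nat.le_of_succ_le hk2) (hnmono.le_apply)
  have hrS : r'.f (nseq k) ∉ S := hN1 _ hkN1
  have hpS : (phi G a).f p ∉ S := hN2 p (le_trans (Nat.le_of_succ_le hk1) hpk)
  have hfst : (r'.f (nseq k)).1 = a.f k := rfl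
  have hconn : ((Hgraph G).vDel S).Reachable ((phi G a).f p) (r'.f (nseq k)) := by
    rw [hppos, henter]
    by_cases hD : a.f k ∈ Dset G
    · have hq := clique_reach G (a := repv G (a.f k) (a.f (k - 1))) (b := (r'.f (nseq k)).2) hD
        (by rw [← henter, ← hppos]; exact hpS)
        (by rw [show (a.f k, (r'.f (nseq k)).2) = r'.f (nseq k) from by rw [← hfst]]; exact hrS)
      rwa [show (a.f k, (r'.f (nseq k)).2) = r'.f (nseq k) from by rw [← hfst]] at hq
    · have h2 : (r'.f (nseq k)).2 = a.f k := by
        rw [← hfst]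
        exact ray_vertex_form G r' (nseq k) (by rw [hfst]; exact hD)
      rw [repv_not G hD]
      have hEq : r'.f (nseq k) = (a.f k, a.f k) := Prod.ext hfst h2
      rw [← hEq]
  refine ⟨p, N1, fun m hm => hN2 m (le_trans (le_trans (Nat.le_of_succ_le hk1) hpk) hm), hN1, ?_⟩
  exact hconn.trans (r'.reachable_tail_vDel hkN1 hN1).symm

lemma surj (r' : GraphRay (Hgraph G)) :
    ∃ a : GraphRay G, endEquiv (Hgraph G) (phi G a) r' := by
  rcases Classical.em (∃ v : V, {n | (r'.f n).1 = v}.Infinite) with ⟨v, hv⟩ | hno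
  · exact surj_clique G r' hv
  · push_neg at hno
    exact surj_trail G r' (fun v => hno v)

end Surjectivity


section Main

open GraphRay TopologicalSpace

variable {V : Type u} (G : SimpleGraph V)

lemma edge_to_end {a b : GraphRay G} (h : edgeEndEquiv G a b) :
    endEquiv (Hgraph G) (phi G a) (phi G b) :=
  fun S hS => lift_conn G hS a b (h (FofS G S a) (FofS_finite G hS a) (FofS_sub G S a))

lemma end_to_edge {a b : GraphRay G} (h : endEquiv (Hgraph G) (phi G a) (phi G b)) :
    edgeEndEquiv G a b :=
  fun F hF _ => proj_conn G hF a b (h (SofF G F) (SofF_finite G hF))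

lemma quotE_eq_iff {a b : GraphRay G} :
    Quot.mk (edgeEndEquiv G) a = Quot.mk (edgeEndEquiv G) b ↔ edgeEndEquiv G a b := by
  rw [Quot.eq]
  exact (edgeEndEquiv_equivalence).eqvGen_iff

lemma quotV_eq_iff {a b : GraphRay (Hgraph G)} :
    Quot.mk (endEquiv (Hgraph G)) a = Quot.mk (endEquiv (Hgraph G)) b ↔
      endEquiv (Hgraph G) a b := by
  rw [Quot.eq]
  exact (endEquiv_equivalence).eqvGen_iff

noncomputable def PhiMap : EdgeEndSpace G → EndSpace (Hgraph G) :=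
  Quot.lift (fun a => Quot.mk _ (phi G a))
    (fun _ _ h => Quot.sound (edge_to_end G h))

lemma PhiMap_bij : Function.Bijective (PhiMap G) := by
  constructor
  · intro x y
    induction x using Quot.ind with
    | _ a =>
      induction y using Quot.ind with
      | _ b =>
        intro h
        have hmk : Quot.mk (endEquiv (Hgraph G)) (phi G a) =
            Quot.mk (endEquiv (Hgraph G)) (phi G b) := h
        have h2 := (quotV_eq_iff G).mp hmk
        exact (quotE_eq_iff G).mpr (end_to_edge G h2)
  · intro y
    induction y using Quot.ind with
    | _ r' =>
      obtain ⟨a, ha⟩ := surj G r'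
      exact ⟨Quot.mk _ a, Quot.sound ha⟩

lemma generateOpen_of_basic {X : Type u} (g : Set (Set X)) (U : Set X)
    (h : ∀ x ∈ U, ∃ B ∈ g, x ∈ B ∧ B ⊆ U) : TopologicalSpace.GenerateOpen g U := by
  have hU : U = ⋃₀ {B | B ∈ g ∧ B ⊆ U} := by
    apply Set.Subset.antisymm
    · intro x hx
      obtain ⟨B, hB, hxB, hBU⟩ := h x hx
      exact ⟨B, ⟨hB, hBU⟩, hxB⟩
    · rintro x ⟨B, ⟨_, hBU⟩, hxB⟩
      exact hBU hxB
  rw [hU]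
  exact TopologicalSpace.GenerateOpen.sUnion _ (fun B hB => .basic _ hB.1)

lemma PhiMap_continuous : Continuous (PhiMap G) := by
  apply continuous_generateFrom_iff.mpr
  rintro O ⟨S, hS, r0, rfl⟩
  show TopologicalSpace.GenerateOpen _ _
  apply generateOpen_of_basic
  intro x hx
  obtain ⟨t0, rfl⟩ := Quot.exists_rep x
  obtain ⟨s', hmk, hconn⟩ := hx
  have hmk' : Quot.mk (endEquiv (Hgraph G)) (phi G t0) =
      Quot.mk (endEquiv (Hgraph G)) s' := hmk
  have hquot : endEquiv (Hgraph G) (phi G t0) s' := (quotV_eq_iff G).mp hmk'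
  have hc2 : VConn (Hgraph G) S r0 (phi G t0) := hconn.trans' (hquot S hS).symm'
  refine ⟨{x | ∃ s, x = Quot.mk (edgeEndEquiv G) s ∧ EConn G (FofS G S t0) t0 s},
    ⟨FofS G S t0, FofS_finite G hS t0, FofS_sub G S t0, t0, rfl⟩,
    ⟨t0, rfl, EConn.refl' (FofS_finite G hS t0) t0⟩, ?_⟩
  rintro y hy
  obtain ⟨u, rfl, hEu⟩ := hy
  have hV : VConn (Hgraph G) S (phi G t0) (phi G u) := lift_conn G hS t0 u hEu
  exact ⟨phi G u, rfl, hc2.trans' hV⟩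

noncomputable def theEquiv : EdgeEndSpace G ≃ EndSpace (Hgraph G) :=
  Equiv.ofBijective _ (PhiMap_bij G)

lemma PhiMap_symm_continuous : Continuous (theEquiv G).symm := by
  apply continuous_generateFrom_iff.mpr
  rintro O ⟨F, hF, hsub, r0, rfl⟩
  erw [← Equiv.image_eq_preimage_symm]
  show TopologicalSpace.GenerateOpen _ _
  apply generateOpen_of_basic
  intro y hy
  obtain ⟨x, hxO, rfl⟩ := hy
  obtain ⟨u0, rfl⟩ := Quot.exists_rep x
  obtain ⟨s, hmk, hEs⟩ := hxO
  have hmk' : Quot.mk (edgeEndEquiv G) u0 = Quot.mk (edgeEndEquiv G) s := hmk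
  have h1 : edgeEndEquiv G u0 s := (quotE_eq_iff G).mp hmk'
  have hE0 : EConn G F r0 u0 := hEs.trans' ((h1 F hF hsub).symm')
  refine ⟨{z | ∃ s', z = Quot.mk (endEquiv (Hgraph G)) s' ∧
      VConn (Hgraph G) (SofF G F) (phi G u0) s'},
    ⟨SofF G F, SofF_finite G hF, phi G u0, rfl⟩,
    ⟨phi G u0, ?_, VConn.refl' (SofF_finite G hF) _⟩, ?_⟩
  · show PhiMap G (Quot.mk _ u0) = Quot.mk (endEquiv (Hgraph G)) (phi G u0)
    rfl
  rintro z hz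
  obtain ⟨s', rfl, hVs⟩ := hz
  obtain ⟨w, hw⟩ := surj G s'
  have hv2 : VConn (Hgraph G) (SofF G F) (phi G u0) (phi G w) :=
    hVs.trans' ((hw (SofF G F) (SofF_finite G hF)).symm')
  have hE2 : EConn G F u0 w := proj_conn G hF u0 w hv2
  refine ⟨Quot.mk _ w, ⟨w, rfl, hE0.trans' hE2⟩, ?_⟩
  show PhiMap G (Quot.mk _ w) = Quot.mk (endEquiv (Hgraph G)) s'
  exact Quot.sound hw

noncomputable def theHomeo : EdgeEndSpace G ≃ₜ EndSpace (Hgraph G) where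
  toEquiv := theEquiv G
  continuous_toFun := PhiMap_continuous G
  continuous_invFun := PhiMap_symm_continuous G

lemma dom_unique (w : V × V) (r' s' : GraphRay (Hgraph G))
    (hr : edgeDominates (Hgraph G) w r') (hs : edgeDominates (Hgraph G) w s') :
    endEquiv (Hgraph G) r' s' := by
  obtain ⟨t, ht⟩ := surj G r'
  obtain ⟨u, hu⟩ := surj G s'
  have eqvE : Equivalence (edgeEndEquiv (Hgraph G)) := edgeEndEquiv_equivalence
  have eqvV : Equivalence (endEquiv (Hgraph G)) := endEquiv_equivalence
  have h1 : edgeEndEquiv (Hgraph G) r' s' := by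
    intro F' hF' hsub'
    obtain ⟨N, ha, hra⟩ := hr F' hF' hsub'
    obtain ⟨M, hb, hrb⟩ := hs F' hF' hsub'
    exact ⟨N, M, ha, hb, hra.symm.trans hrb⟩
  have h2 : edgeEndEquiv (Hgraph G) (phi G t) (phi G u) :=
    eqvE.trans (eqvE.trans (endEquiv_to_edgeEndEquiv ht) h1)
      (eqvE.symm (endEquiv_to_edgeEndEquiv hu))
  have h3 : edgeEndEquiv G t u := fun F hF hsub =>
    projE_conn G hF t u (h2 (liftE G F) (liftE_finite G hF hsub) (liftE_sub G F))
  have h4 : endEquiv (Hgraph G) (phi G t) (phi G u) := edge_to_end G h3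
  exact eqvV.trans (eqvV.trans (eqvV.symm ht) h4) hu

end Main

/-- for every graph `G` there is a graph `H` whose end space is
homeomorphic to the edge-end space of `G`, and in which every vertex
edge-dominates at most one end. -/
theorem edgeEndSpace_homeo_endSpace {V : Type u} (G : SimpleGraph V) :
    ∃ (W : Type u) (H : SimpleGraph W),
      Nonempty (EdgeEndSpace G ≃ₜ EndSpace H) ∧
      ∀ (w : W) (r s : GraphRay H),
        edgeDominates H w r → edgeDominates H w s → endEquiv H r s := by
  refine ⟨V × V, Hgraph G, ⟨theHomeo G⟩, ?_⟩
  intro w r s hr hs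
  exact dom_unique G w r s hr hs
end

section
/- Let G be a graph, let D be the set of vertices of G that edge-dominate some ray, and let H be obtained from G by replacing each v ∈ D with a clique K_v on d(v) vertices, each edge formerly incident to v being attached to a distinct vertex of K_v. If rays r and s of G can be separated by a finite set F of edges of G, then the corresponding rays ρ(r) and ρ(s) in H can be separated by the finite edge set ρ(F); in particular ρ(r) and ρ(s) lie in distinct ends of H. -/
open SimpleGraph

universe u

/-- The set `D` of vertices of `G` that edge-dominate some ray. -/
def edgeDomSet {V : Type u} (G : SimpleGraph V) : Set V :=
  {v | ∃ r : GraphRay G, edgeDominates G v r}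

/-- In the expansion `H` of `G` (each `v ∈ D` blown up to a clique with one vertex per
incident edge), the endpoint on the `v`-side of the former edge `vu`:
if `v ∈ D` it is the clique vertex `(v, u)`, otherwise it is `v` itself. -/
noncomputable def att {V : Type u} (G : SimpleGraph V) (v u : V) : V ⊕ (V × V) :=
  haveI := Classical.dec (v ∈ edgeDomSet G)
  if v ∈ edgeDomSet G then Sum.inr (v, u) else Sum.inl v

/-- The expansion `H` of `G`: each edge `uv` of `G` becomes an edge between
`att G u v` and `att G v u`, and each expanded clique `K_v` is complete. -/
noncomputable def expandGraph {V : Type u} (G : SimpleGraph V) :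
    SimpleGraph (V ⊕ (V × V)) :=
  SimpleGraph.fromRel (fun x y =>
    (∃ u v : V, G.Adj u v ∧ x = att G u v ∧ y = att G v u) ∨
    (∃ v a b : V, v ∈ edgeDomSet G ∧ G.Adj v a ∧ G.Adj v b ∧ a ≠ b ∧
      x = Sum.inr (v, a) ∧ y = Sum.inr (v, b)))

/-- The image `ρ(F)` of a set of edges of `G` under the natural edge injection. -/
def rhoSet {V : Type u} (G : SimpleGraph V) (F : Set (Sym2 V)) :
    Set (Sym2 (V ⊕ (V × V))) :=
  {e | ∃ u v : V, s(u, v) ∈ F ∧ e = s(att G u v, att G v u)}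

/-- The projection from the expansion back to `G`. -/
def piExp {V : Type u} : V ⊕ (V × V) → V := Sum.elim id Prod.fst

lemma piExp_att {V : Type u} (G : SimpleGraph V) (u v : V) : piExp (att G u v) = u := by
  unfold att piExp
  split <;> rfl

lemma ray_edge_inj {V : Type u} {G : SimpleGraph V} (r : GraphRay G) :
    Function.Injective (fun n => s(r.f n, r.f (n + 1))) := by
  intro n k h
  simp only [Sym2.eq_iff] at h
  rcases h with ⟨h1, _⟩ | ⟨h1, h2⟩
  · exact r.inj h1
  · have e1 := r.inj h1
    have e2 := r.inj h2
    omega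

lemma tail_avoid {V : Type u} {G : SimpleGraph V} (r : GraphRay G) (F : Set (Sym2 V))
    (hF : F.Finite) : ∃ N, ∀ n, N ≤ n → s(r.f n, r.f (n + 1)) ∉ F := by
  have hfin : {n | s(r.f n, r.f (n + 1)) ∈ F}.Finite :=
    Set.Finite.preimage (Function.Injective.injOn (ray_edge_inj r)) hF
  obtain ⟨N, hN⟩ := hfin.bddAbove
  refine ⟨N + 1, fun n hn hmem => ?_⟩
  have := hN hmem
  omega

lemma reach_proj {V : Type u} (G : SimpleGraph V) (F : Set (Sym2 V))
    {x y : V ⊕ (V × V)}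
    (h : ((expandGraph G).eDel (rhoSet G F)).Reachable x y) :
    (G.eDel F).Reachable (piExp x) (piExp y) := by
  obtain ⟨w⟩ := h
  induction w with
  | nil => exact Reachable.refl _
  | @cons a b c hab p ih =>
    refine Reachable.trans ?_ ih
    obtain ⟨hadj, hne⟩ := hab
    rw [expandGraph, SimpleGraph.fromRel_adj] at hadj
    obtain ⟨-, hrel | hrel⟩ := hadj
    · rcases hrel with ⟨u, v, huv, hx, hy⟩ | ⟨v, p1, p2, _, _, _, _, hx, hy⟩
      · subst hx; subst hy
        rw [piExp_att, piExp_att]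
        refine SimpleGraph.Adj.reachable ⟨huv, fun hmem => hne ⟨u, v, hmem, rfl⟩⟩
      · subst hx; subst hy
        exact Reachable.refl _
    · rcases hrel with ⟨u, v, huv, hy, hx⟩ | ⟨v, p1, p2, _, _, _, _, hy, hx⟩
      · subst hx; subst hy
        rw [piExp_att, piExp_att]
        refine Reachable.symm (SimpleGraph.Adj.reachable ⟨huv, fun hmem => hne ?_⟩)
        exact ⟨u, v, hmem, by rw [Sym2.eq_swap]⟩
      · subst hx; subst hy
        exact Reachable.refl _

/-- if a finite edge set `F` separates the rays `r` and `s` in `G`, then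
`ρ(F)` separates the corresponding rays `ρ(r)` and `ρ(s)` in the expansion `H`
(their tails lie in different components of `H - ρ(F)`); in particular `ρ(r)` and
`ρ(s)` lie in distinct ends of `H` (some finite vertex set separates their tails). -/
theorem expand_separates {V : Type u} (G : SimpleGraph V) (r s : GraphRay G)
    (F : Set (Sym2 V)) (hF : F.Finite) (hFE : F ⊆ G.edgeSet)
    (hsep : ¬ GraphRay.EConn G F r s) :
    (∃ N : ℕ, ∀ n m : ℕ, N ≤ n → N ≤ m →
      ¬ ((expandGraph G).eDel (rhoSet G F)).Reachable
          (att G (r.f n) (r.f (n + 1))) (att G (s.f m) (s.f (m + 1)))) ∧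
    (∃ S : Set (V ⊕ (V × V)), S.Finite ∧ ∃ N : ℕ, ∀ n m : ℕ, N ≤ n → N ≤ m →
      ¬ ((expandGraph G).vDel S).Reachable
          (att G (r.f n) (r.f (n + 1))) (att G (s.f m) (s.f (m + 1)))) := by
  obtain ⟨N₁, hN₁⟩ := tail_avoid r F hF
  obtain ⟨N₂, hN₂⟩ := tail_avoid s F hF
  have key : ∀ n m : ℕ, max N₁ N₂ ≤ n → max N₁ N₂ ≤ m →
      ¬ ((expandGraph G).eDel (rhoSet G F)).Reachable
        (att G (r.f n) (r.f (n + 1))) (att G (s.f m) (s.f (m + 1))) := by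
    intro n m hn hm hreach
    apply hsep
    refine ⟨n, m, fun k hk => hN₁ k (le_trans (le_trans (le_max_left _ _) hn) hk),
      fun k hk => hN₂ k (le_trans (le_trans (le_max_right _ _) hm) hk), ?_⟩
    have := reach_proj G F hreach
    rwa [piExp_att, piExp_att] at this
  refine ⟨⟨max N₁ N₂, key⟩, ?_⟩
  -- vertex separation
  set S : Set (V ⊕ (V × V)) :=
    (fun p : V × V => att G p.1 p.2) '' {p : V × V | s(p.1, p.2) ∈ F} with hS
  have hPfin : {p : V × V | s(p.1, p.2) ∈ F}.Finite := by
    have : {p : V × V | s(p.1, p.2) ∈ F} ⊆ ⋃ e ∈ F, {p : V × V | s(p.1, p.2) = e} := by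
      intro p hp
      exact Set.mem_biUnion hp rfl
    refine Set.Finite.subset (Set.Finite.biUnion hF fun e _ => ?_) this
    induction e using Sym2.ind with
    | _ a b =>
      refine Set.Finite.subset ((Set.finite_singleton (b, a)).insert (a, b)) ?_
      intro p hp
      rcases Sym2.eq_iff.mp hp with ⟨h1, h2⟩ | ⟨h1, h2⟩
      · left; exact Prod.ext h1 h2
      · right; exact Prod.ext h1 h2
  have hSfin : S.Finite := hPfin.image _
  refine ⟨S, hSfin, max N₁ N₂, fun n m hn hm hreach => ?_⟩
  refine key n m hn hm ?_
  refine Reachable.mono (fun x y hxy => ?_) hreach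
  obtain ⟨hadj, hx, hy⟩ := hxy
  refine ⟨hadj, fun hmem => ?_⟩
  obtain ⟨u, v, huv, heq⟩ := hmem
  rcases Sym2.eq_iff.mp heq with ⟨h1, h2⟩ | ⟨h1, h2⟩
  · exact hx (h1 ▸ ⟨(u, v), huv, rfl⟩)
  · exact hx (h1 ▸ ⟨(v, u), by rwa [Set.mem_setOf_eq, Sym2.eq_swap], rfl⟩)
end

section
/- (Star–Comb Lemma) Let G be a connected graph and U an infinite set of vertices of G. Then G contains either a comb with all teeth in U (a ray r together with infinitely many disjoint paths from r to distinct vertices of U, possibly trivial), or a subdivided infinite star with all leaves in U (a vertex c together with infinitely many paths from c to distinct vertices of U, pairwise disjoint except at c). -/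
open SimpleGraph

universe u

namespace StarComb

variable {V : Type u} {G : SimpleGraph V}

lemma exists_firstHit {R : Set V} : ∀ {a b : V} (w : G.Walk a b), a ∉ R → b ∈ R →
    ∃ c, c ∈ R ∧ ∃ p : G.Walk a c, p.IsPath ∧ ∀ v ∈ p.support, v ∈ R → v = c := by
  intro a b w
  induction w with
  | nil => intro ha hb; exact absurd hb ha
  | @cons a x b h w ih =>
    intro ha hb
    by_cases hx : x ∈ R
    · refine ⟨x, hx, Walk.cons h Walk.nil, ?_, ?_⟩
      · rw [Walk.cons_isPath_iff]
        exact ⟨Walk.IsPath.nil, by simp; exact h.ne⟩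
      · intro v hv hvR
        simp only [Walk.support_cons, Walk.support_nil, List.mem_cons, List.mem_singleton] at hv
        rcases hv with rfl | hv
        · exact absurd hvR ha
        · simpa using hv
    · obtain ⟨c, hc, p, hp, hm⟩ := ih hx hb
      classical
      refine ⟨c, hc, (Walk.cons h p).toPath, ((Walk.cons h p).toPath).2, ?_⟩
      intro v hv hvR
      have h2 := Walk.support_toPath_subset (Walk.cons h p) hv
      rw [Walk.support_cons, List.mem_cons] at h2
      rcases h2 with rfl | hvp
      · exact absurd hvR ha
      · exact hm v hvp hvR

structure PState (G : SimpleGraph V) where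
  len : ℕ
  f : ℕ → V
  par : ℕ → ℕ
  hlen : 0 < len
  inj : ∀ i < len, ∀ j < len, f i = f j → i = j
  par0 : par 0 = 0
  parlt : ∀ i, 0 < i → i < len → par i < i
  adj : ∀ i, 0 < i → i < len → G.Adj (f (par i)) (f i)

def PState.img (S : PState G) : Set V := {v | ∃ i, i < S.len ∧ S.f i = v}

def PState.Ext (S S' : PState G) : Prop :=
  S.len ≤ S'.len ∧ ∀ i < S.len, S'.f i = S.f i ∧ S'.par i = S.par i

lemma PState.Ext.refl (S : PState G) : S.Ext S := ⟨le_rfl, fun _ _ => ⟨rfl, rfl⟩⟩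

lemma PState.Ext.trans {S1 S2 S3 : PState G} (h : S1.Ext S2) (h' : S2.Ext S3) : S1.Ext S3 := by
  refine ⟨h.1.trans h'.1, fun i hi => ?_⟩
  obtain ⟨h1, h2⟩ := h.2 i hi
  obtain ⟨h3, h4⟩ := h'.2 i (lt_of_lt_of_le hi h.1)
  exact ⟨h3.trans h1, h4.trans h2⟩

lemma PState.Ext.img_subset {S S' : PState G} (h : S.Ext S') : S.img ⊆ S'.img := by
  rintro v ⟨i, hi, rfl⟩
  exact ⟨i, lt_of_lt_of_le hi h.1, (h.2 i hi).1⟩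

noncomputable def PState.addOne (S : PState G) {x x' : V} (hx : x ∈ S.img)
    (hadj : G.Adj x x') (hx' : x' ∉ S.img) : PState G where
  len := S.len + 1
  f := fun i => if i = S.len then x' else S.f i
  par := fun i => if i = S.len then hx.choose else S.par i
  hlen := Nat.succ_pos _
  inj := by
    intro i hi j hj hij
    by_cases h1 : i = S.len <;> by_cases h2 : j = S.len
    · rw [h1, h2]
    · simp only [h1, h2, if_pos, if_neg, if_true] at hij
      exact absurd ⟨j, by omega, hij.symm⟩ hx'
    · simp only [h1, h2, if_neg, if_pos] at hij
      exact absurd ⟨i, by omega, hij⟩ hx'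
    · simp only [h1, h2, if_neg] at hij
      exact S.inj i (by omega) j (by omega) hij
  par0 := by
    have : (0 : ℕ) ≠ S.len := by have := S.hlen; omega
    simp [this, S.par0]
  parlt := by
    intro i hi0 hi
    by_cases h1 : i = S.len
    · subst h1
      simp only [if_pos]
      exact lt_of_lt_of_eq hx.choose_spec.1 rfl
    · simp only [h1, if_neg]
      exact S.parlt i hi0 (by omega)
  adj := by
    intro i hi0 hi
    by_cases h1 : i = S.len
    · subst h1
      have hc := hx.choose_spec
      have hne : hx.choose ≠ S.len := by omega
      simp only [if_pos, hne, if_neg]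
      rw [hc.2]
      exact hadj
    · have hilt : i < S.len := by omega
      have hpar := S.parlt i hi0 hilt
      have hne : S.par i ≠ S.len := by omega
      simp only [h1, hne, if_false, ite_false]
      exact S.adj i hi0 hilt

lemma PState.ext_addOne (S : PState G) {x x' : V} (hx : x ∈ S.img)
    (hadj : G.Adj x x') (hx' : x' ∉ S.img) : S.Ext (S.addOne hx hadj hx') := by
  refine ⟨Nat.le_succ _, fun i hi => ?_⟩
  have : i ≠ S.len := by omega
  constructor <;> simp [PState.addOne, this]

lemma PState.img_addOne (S : PState G) {x x' : V} (hx : x ∈ S.img)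
    (hadj : G.Adj x x') (hx' : x' ∉ S.img) :
    (S.addOne hx hadj hx').img = insert x' S.img := by
  ext v
  constructor
  · rintro ⟨i, hi, rfl⟩
    by_cases h1 : i = S.len
    · left; simp [PState.addOne, h1]
    · right; exact ⟨i, by simp [PState.addOne] at hi ⊢; omega, by simp [PState.addOne, h1]⟩
  · rintro (rfl | ⟨i, hi, rfl⟩)
    · exact ⟨S.len, by simp [PState.addOne]⟩
    · exact ⟨i, by simp [PState.addOne]; omega, by simp [PState.addOne]; intro h; omega⟩

lemma PState.addWalk_ex (S : PState G) {x y : V} (p : G.Walk x y) (hx : x ∈ S.img)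
    (hmeet : ∀ v ∈ p.support, v ∈ S.img → v = x) (hpath : p.IsPath) :
    ∃ S' : PState G, S.Ext S' ∧ y ∈ S'.img := by
  induction p generalizing S with
  | nil => exact ⟨S, PState.Ext.refl S, hx⟩
  | @cons a z y h p ih =>
    have hz : z ∈ (Walk.cons h p).support := by simp [Walk.support_cons, Walk.start_mem_support]
    have hznotimg : z ∉ S.img := by
      intro hzimg
      have := hmeet z hz hzimg
      subst this
      rw [Walk.cons_isPath_iff] at hpath
      exact hpath.2 p.start_mem_support
    set S1 := S.addOne hx h hznotimg with hS1
    have hext1 : S.Ext S1 := S.ext_addOne hx h hznotimg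
    have himg1 : S1.img = insert z S.img := S.img_addOne hx h hznotimg
    have hzin : z ∈ S1.img := by rw [himg1]; exact Set.mem_insert _ _
    have hpath' : p.IsPath := (Walk.cons_isPath_iff h p).mp hpath |>.1
    have hmeet' : ∀ v ∈ p.support, v ∈ S1.img → v = z := by
      intro v hv hvimg
      rw [himg1] at hvimg
      rcases hvimg with rfl | hvimg
      · rfl
      · have : v = a := hmeet v (by rw [Walk.support_cons]; exact List.mem_cons_of_mem _ hv) hvimg
        subst this
        exact absurd hv ((Walk.cons_isPath_iff h p).mp hpath).2
    obtain ⟨S', hext, hy⟩ := ih S1 hzin hmeet' hpath'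
    exact ⟨S', hext1.trans hext, hy⟩

lemma PState.step_ex (hconn : G.Connected) (S : PState G) (u : V) :
    ∃ S' : PState G, S.Ext S' ∧ u ∈ S'.img := by
  by_cases hu : u ∈ S.img
  · exact ⟨S, PState.Ext.refl S, hu⟩
  · have hv0 : S.f 0 ∈ S.img := ⟨0, S.hlen, rfl⟩
    obtain ⟨w⟩ := hconn.preconnected u (S.f 0)
    obtain ⟨c, hc, p, hp, hm⟩ := exists_firstHit (R := S.img) w hu hv0
    refine S.addWalk_ex p.reverse hc ?_ hp.reverse
    intro v hv hvimg
    rw [Walk.support_reverse, List.mem_reverse] at hv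
    exact hm v hv hvimg

end StarComb
namespace StarComb

variable {V : Type u} {G : SimpleGraph V}

noncomputable def initState (v0 : V) : PState G where
  len := 1
  f := fun _ => v0
  par := fun _ => 0
  hlen := Nat.one_pos
  inj := by intro i hi j hj _; omega
  par0 := rfl
  parlt := by intro i hi0 hi; omega
  adj := by intro i hi0 hi; omega

noncomputable def stChain (hconn : G.Connected) (e : ℕ → V) : ℕ → PState G
  | 0 => initState (e 0)
  | n + 1 => (PState.step_ex hconn (stChain hconn e n) (e n)).choose

lemma stChain_ext (hconn : G.Connected) (e : ℕ → V) (n : ℕ) :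
    (stChain hconn e n).Ext (stChain hconn e (n + 1)) :=
  (PState.step_ex hconn (stChain hconn e n) (e n)).choose_spec.1

lemma stChain_mem (hconn : G.Connected) (e : ℕ → V) (n : ℕ) :
    e n ∈ (stChain hconn e (n + 1)).img :=
  (PState.step_ex hconn (stChain hconn e n) (e n)).choose_spec.2

lemma stChain_ext_le (hconn : G.Connected) (e : ℕ → V) {m n : ℕ} (h : m ≤ n) :
    (stChain hconn e m).Ext (stChain hconn e n) := by
  induction n with
  | zero => have : m = 0 := by omega
            subst this; exact PState.Ext.refl _
  | succ n ih =>
    rcases Nat.lt_or_ge m (n+1) with h'|h'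
    · exact (ih (by omega)).trans (stChain_ext hconn e n)
    · have : m = n + 1 := by omega
      subst this; exact PState.Ext.refl _

lemma stChain_len_ge (hconn : G.Connected) (e : ℕ → V) (he : Function.Injective e) (n : ℕ) :
    n ≤ (stChain hconn e n).len := by
  have hmem : ∀ k < n, e k ∈ (stChain hconn e n).img := by
    intro k hk
    exact (stChain_ext_le hconn e (show k + 1 ≤ n by omega)).img_subset (stChain_mem hconn e k)
  set S := stChain hconn e n
  have hchoice : ∀ k : Fin n, ∃ i, i < S.len ∧ S.f i = e k := fun k => hmem k k.2
  let g : Fin n → Fin S.len := fun k => ⟨(hchoice k).choose, (hchoice k).choose_spec.1⟩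
  have hg : Function.Injective g := by
    intro k k' hkk
    have h1 := (hchoice k).choose_spec.2
    have h2 := (hchoice k').choose_spec.2
    have h3 : (hchoice k).choose = (hchoice k').choose := by
      simpa [g] using congrArg Fin.val hkk
    have : e k = e k' := by rw [← h1, ← h2, h3]
    exact Fin.ext (he this)
  simpa using Fintype.card_le_of_injective g hg

lemma exists_tree (hconn : G.Connected) (U : Set V) (hU : U.Infinite) :
    ∃ (F : ℕ → V) (P : ℕ → ℕ), Function.Injective F ∧ P 0 = 0 ∧
      (∀ i, 0 < i → P i < i) ∧ (∀ i, 0 < i → G.Adj (F (P i)) (F i)) ∧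
      {i | F i ∈ U}.Infinite := by
  classical
  let eE := hU.natEmbedding
  let e : ℕ → V := fun n => (eE n : V)
  have he : Function.Injective e := fun a b hab => eE.injective (Subtype.ext hab)
  have heU : ∀ n, e n ∈ U := fun n => (eE n).2
  set st := stChain hconn e with hst
  have hlen' : ∀ n : ℕ, n ≤ (st n).len := fun n => stChain_len_ge hconn e he n
  have hlen : ∀ i : ℕ, i < (st (i+1)).len := fun i => hlen' (i+1)
  set F : ℕ → V := fun i => (st (i+1)).f i with hF
  set P : ℕ → ℕ := fun i => (st (i+1)).par i with hP
  have stab : ∀ {m n : ℕ}, m ≤ n → ∀ i < (st m).len,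
      (st n).f i = (st m).f i ∧ (st n).par i = (st m).par i := by
    intro m n hmn i hi
    exact (stChain_ext_le hconn e hmn).2 i hi
  have hFeq : ∀ {i n : ℕ}, i < n → F i = (st n).f i ∧ P i = (st n).par i := by
    intro i n hin
    rcases le_total (i+1) n with h|h
    · have := stab h i (hlen i)
      exact ⟨this.1.symm, this.2.symm⟩
    · have h2 : i < (st n).len := lt_of_lt_of_le hin (hlen' n)
      have := stab h i h2
      exact ⟨this.1, this.2⟩
  have hFinj : Function.Injective F := by
    intro i j hij
    set n := max i j + 1
    have hi : i < n := by omega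
    have hj : j < n := by omega
    have h1 := (hFeq hi).1
    have h2 := (hFeq hj).1
    have hilen : i < (st n).len := lt_of_lt_of_le hi (hlen' n)
    have hjlen : j < (st n).len := lt_of_lt_of_le hj (hlen' n)
    exact (st n).inj i hilen j hjlen (by rw [← h1, ← h2, hij])
  have hP0 : P 0 = 0 := (st 1).par0
  have hPlt : ∀ i, 0 < i → P i < i := by
    intro i hi
    exact (st (i+1)).parlt i hi (hlen i)
  have hadj : ∀ i, 0 < i → G.Adj (F (P i)) (F i) := by
    intro i hi
    have h1 : (st (i+1)).par i < i := (st (i+1)).parlt i hi (hlen i)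
    have h2 := (st (i+1)).adj i hi (hlen i)
    have h3 : F (P i) = (st (i+1)).f ((st (i+1)).par i) := by
      have : P i = (st (i+1)).par i := rfl
      rw [this]
      exact (hFeq (show (st (i+1)).par i < i + 1 by omega)).1
    rw [h3]
    exact h2
  have hAinf : {i | F i ∈ U}.Infinite := by
    have hpsi : ∀ n : ℕ, ∃ i, i < (st (n+1)).len ∧ (st (n+1)).f i = e n :=
      fun n => stChain_mem hconn e n
    let psi : ℕ → ℕ := fun n => (hpsi n).choose
    have hpsiF : ∀ n, F (psi n) = e n := by
      intro n
      have h1 := (hpsi n).choose_spec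
      rcases le_total (psi n + 1) (n+1) with h|h
      · have := stab h (psi n) (hlen (psi n))
        change (st (psi n + 1)).f (psi n) = e n
        rw [← this.1]; exact h1.2
      · have := stab h (psi n) h1.1
        change (st (psi n + 1)).f (psi n) = e n
        rw [this.1]; exact h1.2
    have hpsiinj : Function.Injective psi := by
      intro n m hnm
      apply he
      rw [← hpsiF n, ← hpsiF m, hnm]
    exact Set.infinite_of_injective_forall_mem hpsiinj (fun n => by
      simp only [Set.mem_setOf_eq, hpsiF n]; exact heU n)
  exact ⟨F, P, hFinj, hP0, hPlt, hadj, hAinf⟩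

end StarComb
namespace StarComb

variable {V : Type u} {G : SimpleGraph V}

def Anc (P : ℕ → ℕ) (t n : ℕ) : Prop := ∃ k, P^[k] n = t

section AncLemmas

variable {P : ℕ → ℕ} (hP0 : P 0 = 0) (hPlt : ∀ i, 0 < i → P i < i)

lemma anc_refl (n : ℕ) : Anc P n n := ⟨0, rfl⟩

lemma anc_trans {a b c : ℕ} : Anc P a b → Anc P b c → Anc P a c := by
  rintro ⟨i, hi⟩ ⟨j, hj⟩
  exact ⟨i + j, by rw [Function.iterate_add_apply, hj, hi]⟩

include hP0 hPlt in
lemma par_le (n : ℕ) : P n ≤ n := by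
  rcases Nat.eq_zero_or_pos n with h | h
  · rw [h, hP0]
  · exact (hPlt n h).le

include hP0 hPlt in
lemma iter_le (k n : ℕ) : P^[k] n ≤ n := by
  induction k with
  | zero => exact le_rfl
  | succ k ih =>
    rw [Function.iterate_succ_apply']
    exact (par_le hP0 hPlt _).trans ih

include hP0 hPlt in
lemma anc_le {t n : ℕ} (h : Anc P t n) : t ≤ n := by
  obtain ⟨k, hk⟩ := h
  rw [← hk]; exact iter_le hP0 hPlt k n

include hP0 hPlt in
lemma anc_antisymm {t n : ℕ} (h : Anc P t n) (h' : Anc P n t) : t = n :=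
  le_antisymm (anc_le hP0 hPlt h) (anc_le hP0 hPlt h')

include hP0 in
lemma iter_zero (k : ℕ) : P^[k] 0 = 0 := by
  induction k with
  | zero => rfl
  | succ k ih => rw [Function.iterate_succ_apply, hP0, ih]

include hP0 in
lemma anc_step {t n : ℕ} (h : Anc P t n) : t = n ∨ (0 < n ∧ Anc P t (P n)) := by
  obtain ⟨k, hk⟩ := h
  rcases Nat.eq_zero_or_pos n with hn | hn
  · left
    subst hn
    rw [iter_zero hP0] at hk
    omega
  · cases k with
    | zero => left; exact hk.symm
    | succ k =>
      right
      exact ⟨hn, ⟨k, by rw [← Function.iterate_succ_apply, hk]⟩⟩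

lemma anc_of_anc_par {t n : ℕ} (h : Anc P t (P n)) : Anc P t n := by
  obtain ⟨k, hk⟩ := h
  exact ⟨k + 1, by rw [Function.iterate_succ_apply]; exact hk⟩

include hP0 hPlt in
lemma anc_zero (n : ℕ) : Anc P 0 n := by
  induction n using Nat.strong_induction_on with
  | _ n ih =>
    rcases Nat.eq_zero_or_pos n with h | h
    · subst h; exact anc_refl 0
    · exact anc_of_anc_par (ih (P n) (hPlt n h))

lemma anc_total {a b n : ℕ} (h : Anc P a n) (h' : Anc P b n) : Anc P a b ∨ Anc P b a := by
  obtain ⟨i, hi⟩ := h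
  obtain ⟨j, hj⟩ := h'
  rcases le_total i j with hij | hij
  · right
    refine ⟨j - i, ?_⟩
    rw [← hi, ← Function.iterate_add_apply]
    rw [Nat.sub_add_cancel hij, hj]
  · left
    refine ⟨i - j, ?_⟩
    rw [← hj, ← Function.iterate_add_apply]
    rw [Nat.sub_add_cancel hij, hi]

include hP0 hPlt in
lemma exists_child {t a : ℕ} (h : Anc P t a) (hne : a ≠ t) :
    ∃ c, 0 < c ∧ P c = t ∧ Anc P c a := by
  induction a using Nat.strong_induction_on with
  | _ a ih =>
    obtain ⟨ha, hpar⟩ := (anc_step hP0 h).resolve_left (fun he => hne he.symm)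
    by_cases hPa : P a = t
    · exact ⟨a, ha, hPa, anc_refl a⟩
    · obtain ⟨c, hc1, hc2, hc3⟩ := ih (P a) (hPlt a ha) hpar hPa
      exact ⟨c, hc1, hc2, anc_of_anc_par hc3⟩

end AncLemmas

noncomputable def walkUp (G : SimpleGraph V) (F : ℕ → V) (P : ℕ → ℕ) (hP0 : P 0 = 0)
    (hPlt : ∀ i, 0 < i → P i < i) (hadj : ∀ i, 0 < i → G.Adj (F (P i)) (F i)) (t : ℕ) :
    (n : ℕ) → Anc P t n → G.Walk (F n) (F t)
  | n, h =>
    if he : n = t then (Walk.nil' (F t)).copy (by rw [he]) rfl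
    else
      have h1 : 0 < n ∧ Anc P t (P n) :=
        (anc_step hP0 h).resolve_left (fun he' => he he'.symm)
      Walk.cons (hadj n h1.1).symm (walkUp G F P hP0 hPlt hadj t (P n) h1.2)
  termination_by n => n
  decreasing_by exact hPlt n h1.1

variable {F : ℕ → V} {P : ℕ → ℕ}

lemma walkUp_support (hP0 : P 0 = 0) (hPlt : ∀ i, 0 < i → P i < i)
    (hadj : ∀ i, 0 < i → G.Adj (F (P i)) (F i)) (t : ℕ) :
    ∀ (n : ℕ) (h : Anc P t n), ∀ v ∈ (walkUp G F P hP0 hPlt hadj t n h).support,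
      ∃ m, v = F m ∧ Anc P t m ∧ Anc P m n := by
  intro n
  induction n using Nat.strong_induction_on with
  | _ n ih =>
    intro h v hv
    rw [walkUp] at hv
    split_ifs at hv with he
    · subst he
      rw [Walk.support_copy] at hv
      simp only [Walk.nil', Walk.support_nil, List.mem_singleton] at hv
      exact ⟨n, hv, anc_refl n, anc_refl n⟩
    · rw [Walk.support_cons] at hv
      rcases List.mem_cons.mp hv with hv | hv
      · exact ⟨n, hv, h, anc_refl n⟩
      · have h1 : 0 < n ∧ Anc P t (P n) :=
          (anc_step hP0 h).resolve_left (fun he' => he he'.symm)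
        obtain ⟨m, hm1, hm2, hm3⟩ := ih (P n) (hPlt n h1.1) h1.2 v hv
        exact ⟨m, hm1, hm2, anc_of_anc_par hm3⟩

lemma walkUp_isPath (hinj : Function.Injective F) (hP0 : P 0 = 0)
    (hPlt : ∀ i, 0 < i → P i < i)
    (hadj : ∀ i, 0 < i → G.Adj (F (P i)) (F i)) (t : ℕ) :
    ∀ (n : ℕ) (h : Anc P t n), (walkUp G F P hP0 hPlt hadj t n h).IsPath := by
  intro n
  induction n using Nat.strong_induction_on with
  | _ n ih =>
    intro h
    rw [walkUp]
    split_ifs with he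
    · subst he
      rw [Walk.isPath_copy]
      exact Walk.IsPath.nil
    · have h1 : 0 < n ∧ Anc P t (P n) :=
        (anc_step hP0 h).resolve_left (fun he' => he he'.symm)
      rw [Walk.cons_isPath_iff]
      refine ⟨ih (P n) (hPlt n h1.1) h1.2, ?_⟩
      intro hmem
      obtain ⟨m, hm1, _, hm3⟩ := walkUp_support hP0 hPlt hadj t (P n) h1.2 (F n) hmem
      have : n = m := hinj hm1
      subst this
      have := anc_le hP0 hPlt hm3
      have := hPlt n h1.1
      omega

end StarComb
namespace StarComb

variable {V : Type u} {G : SimpleGraph V}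

open Classical in
noncomputable def childOf (P : ℕ → ℕ) (t a : ℕ) : ℕ :=
  if h : ∃ c, 0 < c ∧ P c = t ∧ Anc P c a then h.choose else 0

lemma childOf_spec {P : ℕ → ℕ} {t a : ℕ} (hex : ∃ c, 0 < c ∧ P c = t ∧ Anc P c a) :
    0 < childOf P t a ∧ P (childOf P t a) = t ∧ Anc P (childOf P t a) a := by
  rw [childOf, dif_pos hex]
  exact hex.choose_spec

open Classical in
noncomputable def pickS (Sfun : List ℕ → Set ℕ) (l : List ℕ) : ℕ :=
  if h : (Sfun l).Nonempty then h.some else 0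

open Classical in
noncomputable def pickSeq (Sfun : List ℕ → Set ℕ) : ℕ → List ℕ
  | 0 => []
  | k + 1 => pickS Sfun (pickSeq Sfun k) :: pickSeq Sfun k

lemma mem_pickSeq (Sfun : List ℕ → Set ℕ) (k : ℕ) (x : ℕ) :
    x ∈ pickSeq Sfun k ↔ ∃ j, j < k ∧ x = pickS Sfun (pickSeq Sfun j) := by
  induction k with
  | zero => simp [pickSeq]
  | succ k ih =>
    simp only [pickSeq, List.mem_cons, ih]
    constructor
    · rintro (rfl | ⟨j, hj, rfl⟩)
      · exact ⟨k, by omega, rfl⟩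
      · exact ⟨j, by omega, rfl⟩
    · rintro ⟨j, hj, rfl⟩
      rcases Nat.lt_or_ge j k with h | h
      · exact Or.inr ⟨j, h, rfl⟩
      · have : j = k := by omega
        subst this; exact Or.inl rfl

lemma star_case {F : ℕ → V} {P : ℕ → ℕ} (U : Set V) (hinj : Function.Injective F)
    (hP0 : P 0 = 0) (hPlt : ∀ i, 0 < i → P i < i)
    (hadj : ∀ i, 0 < i → G.Adj (F (P i)) (F i)) (t : ℕ)
    (hinf : ({i | F i ∈ U} ∩ {n | Anc P t n}).Infinite)
    (hfin : ∀ c, 0 < c → P c = t → ({i | F i ∈ U} ∩ {n | Anc P c n}).Finite) :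
    ∃ (c : V) (u : ℕ → V) (Pp : (n : ℕ) → G.Walk c (u n)),
      Function.Injective u ∧ (∀ n, u n ∈ U) ∧ (∀ n, (Pp n).IsPath) ∧
      (∀ n, u n ≠ c) ∧
      (∀ n m, n ≠ m → ∀ x ∈ (Pp n).support, x ∈ (Pp m).support → x = c) := by
  classical
  set A : Set ℕ := {i | F i ∈ U} with hA
  set Sfun : List ℕ → Set ℕ := fun l =>
    (A ∩ {n | Anc P t n}) \ ({t} ∪ {x | ∃ a ∈ l, x ∈ A ∧ Anc P (childOf P t a) x}) with hSfun
  set v : ℕ → ℕ := fun k => pickS Sfun (pickSeq Sfun k) with hv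
  -- all stages nonempty
  have key : ∀ k, (Sfun (pickSeq Sfun k)).Nonempty := by
    intro k
    induction k using Nat.strong_induction_on with
    | _ k ih =>
      have hgood : ∀ a ∈ pickSeq Sfun k, a ∈ A ∧ Anc P t a ∧ a ≠ t := by
        intro a ha
        obtain ⟨j, hj, rfl⟩ := (mem_pickSeq Sfun k a).mp ha
        have hne := ih j hj
        have hmem : pickS Sfun (pickSeq Sfun j) ∈ Sfun (pickSeq Sfun j) := by
          rw [pickS, dif_pos hne]; exact hne.some_mem
        rw [hSfun] at hmem
        obtain ⟨⟨h1, h2⟩, h3⟩ := hmem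
        refine ⟨h1, h2, ?_⟩
        intro he
        exact h3 (Or.inl he)
      have hfin2 : (({t} : Set ℕ) ∪
          {x | ∃ a ∈ pickSeq Sfun k, x ∈ A ∧ Anc P (childOf P t a) x}).Finite := by
        refine (Set.finite_singleton t).union ?_
        have hsub : {x | ∃ a ∈ pickSeq Sfun k, x ∈ A ∧ Anc P (childOf P t a) x} ⊆
            ⋃ a ∈ {a | a ∈ pickSeq Sfun k}, (A ∩ {n | Anc P (childOf P t a) n}) := by
          rintro x ⟨a, ha, hx1, hx2⟩
          exact Set.mem_biUnion ha ⟨hx1, hx2⟩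
        refine Set.Finite.subset ?_ hsub
        refine Set.Finite.biUnion (List.finite_toSet _) ?_
        intro a ha
        obtain ⟨h1, h2, h3⟩ := hgood a ha
        obtain ⟨hc1, hc2, _⟩ := childOf_spec (exists_child hP0 hPlt h2 h3)
        exact hfin _ hc1 hc2
      exact (hinf.diff hfin2).nonempty
  have hvmem : ∀ k, v k ∈ Sfun (pickSeq Sfun k) := by
    intro k
    show pickS Sfun (pickSeq Sfun k) ∈ Sfun (pickSeq Sfun k)
    rw [pickS, dif_pos (key k)]
    exact (key k).some_mem
  have hvA : ∀ k, v k ∈ A := fun k => ((hvmem k).1).1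
  have hvanc : ∀ k, Anc P t (v k) := fun k => ((hvmem k).1).2
  have hvne : ∀ k, v k ≠ t := by
    intro k he
    exact (hvmem k).2 (Or.inl he)
  have hvnotchild : ∀ j k, j < k → ¬ Anc P (childOf P t (v j)) (v k) := by
    intro j k hjk hanc
    refine (hvmem k).2 (Or.inr ⟨v j, ?_, hvA k, hanc⟩)
    exact (mem_pickSeq Sfun k (v j)).mpr ⟨j, hjk, rfl⟩
  have hchild : ∀ k, 0 < childOf P t (v k) ∧ P (childOf P t (v k)) = t ∧
      Anc P (childOf P t (v k)) (v k) :=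
    fun k => childOf_spec (exists_child hP0 hPlt (hvanc k) (hvne k))
  -- the key: non-t support nodes lie above childOf (v k)
  have hsupclaim : ∀ k m', Anc P t m' → Anc P m' (v k) → m' ≠ t →
      Anc P (childOf P t (v k)) m' := by
    intro k m' htm' hm'v hm't
    obtain ⟨hc1, hc2, hc3⟩ := hchild k
    rcases anc_total hm'v hc3 with h | h
    · -- Anc m' (childOf)
      rcases anc_step hP0 h with he | ⟨_, h2⟩
      · rw [← he]; exact anc_refl m'
      · rw [hc2] at h2
        exact absurd (anc_antisymm hP0 hPlt h2 htm') hm't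
    · exact h
  have hvinj : Function.Injective v := by
    intro j k hjk
    by_contra hne
    rcases Nat.lt_or_ge j k with h | h
    · exact hvnotchild j k h (hjk ▸ (hchild j).2.2)
    · have h' : k < j := by omega
      exact hvnotchild k j h' (hjk ▸ (hchild k).2.2)
  refine ⟨F t, fun n => F (v n),
    fun n => (walkUp G F P hP0 hPlt hadj t (v n) (hvanc n)).reverse,
    ?_, ?_, ?_, ?_, ?_⟩
  · exact fun j k h => hvinj (hinj h)
  · exact fun n => hvA n
  · exact fun n => (walkUp_isPath hinj hP0 hPlt hadj t (v n) (hvanc n)).reverse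
  · intro n he
    exact hvne n (hinj he)
  · intro n m hnm x hxn hxm
    rw [Walk.support_reverse, List.mem_reverse] at hxn hxm
    obtain ⟨m1, rfl, hm1t, hm1v⟩ := walkUp_support hP0 hPlt hadj t (v n) (hvanc n) x hxn
    obtain ⟨m2, he2, hm2t, hm2v⟩ := walkUp_support hP0 hPlt hadj t (v m) (hvanc m) _ hxm
    have hm12 : m1 = m2 := hinj he2
    subst hm12
    by_contra hxt
    have hm1net : m1 ≠ t := fun he => hxt (congrArg F he)
    have h1 := hsupclaim n m1 hm1t hm1v hm1net
    have h2 := hsupclaim m m1 hm2t hm2v hm1net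
    -- childOf (v n) and childOf (v m) both ancestors of m1, hence comparable, hence equal
    have hceq : childOf P t (v n) = childOf P t (v m) := by
      have hanct : ∀ k, Anc P t (childOf P t (v k)) := by
        intro k
        exact ⟨1, by simp [(hchild k).2.1]⟩
      have hne : ∀ k, childOf P t (v k) ≠ t := by
        intro k he
        have h1 := (hchild k).1
        have h3 := (hchild k).2.1
        have h4 := hPlt _ h1
        omega
      rcases anc_total h1 h2 with h | h
      · rcases anc_step hP0 h with he | ⟨_, h3⟩
        · exact he
        · rw [(hchild m).2.1] at h3
          exact absurd (anc_antisymm hP0 hPlt h3 (hanct n)) (hne n)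
      · rcases anc_step hP0 h with he | ⟨_, h3⟩
        · exact he.symm
        · rw [(hchild n).2.1] at h3
          exact absurd (anc_antisymm hP0 hPlt h3 (hanct m)) (hne m)
    rcases Nat.lt_or_ge n m with h | h
    · exact hvnotchild n m h (hceq ▸ (hchild m).2.2)
    · have h' : m < n := by omega
      exact hvnotchild m n h' (hceq.symm ▸ (hchild n).2.2)

end StarComb
namespace StarComb

variable {V : Type u} {G : SimpleGraph V}

noncomputable def branch (A : Set ℕ) (P : ℕ → ℕ)
    (hstep : ∀ t, (A ∩ {n | Anc P t n}).Infinite →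
      ∃ c, 0 < c ∧ P c = t ∧ (A ∩ {n | Anc P c n}).Infinite)
    (h0 : (A ∩ {n | Anc P 0 n}).Infinite) : ℕ → {n : ℕ // (A ∩ {m | Anc P n m}).Infinite}
  | 0 => ⟨0, h0⟩
  | k + 1 => ⟨(hstep (branch A P hstep h0 k).1 (branch A P hstep h0 k).2).choose,
      (hstep (branch A P hstep h0 k).1 (branch A P hstep h0 k).2).choose_spec.2.2⟩

lemma branch_spec (A : Set ℕ) (P : ℕ → ℕ)
    (hstep : ∀ t, (A ∩ {n | Anc P t n}).Infinite →
      ∃ c, 0 < c ∧ P c = t ∧ (A ∩ {n | Anc P c n}).Infinite)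
    (h0 : (A ∩ {n | Anc P 0 n}).Infinite) (k : ℕ) :
    0 < (branch A P hstep h0 (k+1)).1 ∧
      P (branch A P hstep h0 (k+1)).1 = (branch A P hstep h0 k).1 := by
  have h := (hstep (branch A P hstep h0 k).1 (branch A P hstep h0 k).2).choose_spec
  exact ⟨h.1, h.2.1⟩

noncomputable def teethW (A : Set ℕ) (P : ℕ → ℕ) (b : ℕ → ℕ)
    (hinf : ∀ j, (A ∩ {m | Anc P (b j) m}).Infinite) : ℕ → ℕ
  | 0 => (hinf 0).nonempty.some
  | k + 1 => (hinf (teethW A P b hinf k + 1)).nonempty.some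

noncomputable def teethM (A : Set ℕ) (P : ℕ → ℕ) (b : ℕ → ℕ)
    (hinf : ∀ j, (A ∩ {m | Anc P (b j) m}).Infinite) : ℕ → ℕ
  | 0 => 0
  | k + 1 => teethW A P b hinf k + 1

lemma teeth_spec (A : Set ℕ) (P : ℕ → ℕ) (b : ℕ → ℕ)
    (hinf : ∀ j, (A ∩ {m | Anc P (b j) m}).Infinite) (k : ℕ) :
    teethW A P b hinf k ∈ A ∩ {m | Anc P (b (teethM A P b hinf k)) m} := by
  cases k with
  | zero => exact (hinf 0).nonempty.some_mem
  | succ k => exact (hinf (teethW A P b hinf k + 1)).nonempty.some_mem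

lemma comb_case {F : ℕ → V} {P : ℕ → ℕ} (U : Set V) (hinj : Function.Injective F)
    (hP0 : P 0 = 0) (hPlt : ∀ i, 0 < i → P i < i)
    (hadj : ∀ i, 0 < i → G.Adj (F (P i)) (F i))
    (hA : {i | F i ∈ U}.Infinite)
    (hstep : ∀ t, ({i | F i ∈ U} ∩ {n | Anc P t n}).Infinite →
      ∃ c, 0 < c ∧ P c = t ∧ ({i | F i ∈ U} ∩ {n | Anc P c n}).Infinite) :
    ∃ (r : GraphRay G) (a : ℕ → ℕ) (u : ℕ → V)
        (Pp : (n : ℕ) → G.Walk (r.f (a n)) (u n)),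
      Function.Injective u ∧ (∀ n, u n ∈ U) ∧ (∀ n, (Pp n).IsPath) ∧
      (∀ n m, n ≠ m → ∀ x ∈ (Pp n).support, x ∉ (Pp m).support) ∧
      (∀ n k, r.f k ∈ (Pp n).support → r.f k = r.f (a n)) := by
  classical
  set A : Set ℕ := {i | F i ∈ U} with hAdef
  have h0 : (A ∩ {n | Anc P 0 n}).Infinite := by
    have he : A ∩ {n | Anc P 0 n} = A :=
      Set.inter_eq_left.mpr (fun n _ => anc_zero hP0 hPlt n)
    rw [he]; exact hA
  set b : ℕ → ℕ := fun k => (branch A P hstep h0 k).1 with hbdef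
  have binf : ∀ k, (A ∩ {m | Anc P (b k) m}).Infinite := fun k => (branch A P hstep h0 k).2
  have bspec : ∀ k, 0 < b (k+1) ∧ P (b (k+1)) = b k := fun k => branch_spec A P hstep h0 k
  have bmono : StrictMono b := by
    apply strictMono_nat_of_lt_succ
    intro k
    have h1 := (bspec k).1
    have h2 := (bspec k).2
    have h3 := hPlt _ h1
    omega
  set w : ℕ → ℕ := teethW A P b binf with hwdef
  set mq : ℕ → ℕ := teethM A P b binf with hmqdef
  have wspec : ∀ k, w k ∈ A ∧ Anc P (b (mq k)) (w k) := fun k => teeth_spec A P b binf k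
  have wlb : ∀ k, b (mq k) ≤ w k := fun k => anc_le hP0 hPlt (wspec k).2
  have hmq1 : ∀ k, mq (k+1) = w k + 1 := fun k => rfl
  have blek : ∀ k, k ≤ b k := fun k => bmono.le_apply
  have wmono : StrictMono w := by
    apply strictMono_nat_of_lt_succ
    intro k
    have h1 := wlb (k+1)
    rw [hmq1 k] at h1
    have h2 := blek (w k + 1)
    omega
  have mqmono : StrictMono mq := by
    apply strictMono_nat_of_lt_succ
    intro k
    have h1 := wlb k
    have h2 := blek (mq k)
    rw [hmq1 k]
    omega
  have hint : ∀ n k, n < k → w n < b (mq k) := by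
    intro n k hnk
    have h1 : mq (n+1) ≤ mq k := mqmono.monotone (by omega)
    have h2 : b (mq (n+1)) ≤ b (mq k) := bmono.monotone h1
    have h3 := blek (mq (n+1))
    rw [hmq1 n] at h2 h3
    omega
  have hzex : ∀ n, ∃ i, P^[i] (w n) ∈ Set.range b := by
    intro n
    obtain ⟨i, hi⟩ := (wspec n).2
    exact ⟨i, ⟨mq n, hi.symm⟩⟩
  set i0 : ℕ → ℕ := fun n => Nat.find (hzex n) with hi0def
  set z : ℕ → ℕ := fun n => P^[i0 n] (w n) with hzdef
  have hzr : ∀ n, z n ∈ Set.range b := fun n => Nat.find_spec (hzex n)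
  set a : ℕ → ℕ := fun n => (hzr n).choose with hadef
  have ha : ∀ n, b (a n) = z n := fun n => (hzr n).choose_spec
  have hzanc : ∀ n, Anc P (z n) (w n) := fun n => ⟨i0 n, rfl⟩
  have hkey : ∀ n m', Anc P (z n) m' → Anc P m' (w n) → m' ∈ Set.range b → m' = z n := by
    intro n m' h1 h2 hr
    obtain ⟨j, hj⟩ := h2
    rcases Nat.lt_or_ge j (i0 n) with h | h
    · exact absurd (hj ▸ hr) (Nat.find_min (hzex n) h)
    · have he : m' = P^[j - i0 n] (z n) := by
        rw [hzdef]
        show m' = P^[j - i0 n] (P^[i0 n] (w n))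
        rw [← Function.iterate_add_apply, Nat.sub_add_cancel h, hj]
      exact (anc_antisymm hP0 hPlt h1 ⟨j - i0 n, he.symm⟩).symm
  have hblez : ∀ n, Anc P (b (mq n)) (z n) := by
    intro n
    obtain ⟨i, hi⟩ := (wspec n).2
    rcases Nat.lt_or_ge i (i0 n) with h | h
    · exact absurd (hi ▸ ⟨mq n, rfl⟩ : P^[i] (w n) ∈ Set.range b) (Nat.find_min (hzex n) h)
    · refine ⟨i - i0 n, ?_⟩
      rw [hzdef]
      show P^[i - i0 n] (P^[i0 n] (w n)) = b (mq n)
      rw [← Function.iterate_add_apply, Nat.sub_add_cancel h, hi]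
  have hradj : ∀ k, G.Adj (F (b k)) (F (b (k+1))) := by
    intro k
    have h := hadj (b (k+1)) (bspec k).1
    rw [(bspec k).2] at h
    exact h
  refine ⟨⟨fun k => F (b k), hinj.comp bmono.injective, hradj⟩, a, fun n => F (w n), fun n =>
    ((walkUp G F P hP0 hPlt hadj (z n) (w n) (hzanc n)).reverse).copy
      (congrArg F (ha n)).symm rfl, ?_, ?_, ?_, ?_, ?_⟩
  · exact fun n m h => wmono.injective (hinj h)
  · exact fun n => (wspec n).1
  · intro n
    rw [Walk.isPath_copy]
    exact (walkUp_isPath hinj hP0 hPlt hadj (z n) (w n) (hzanc n)).reverse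
  · intro n m hnm x hxn hxm
    rw [Walk.support_copy, Walk.support_reverse, List.mem_reverse] at hxn hxm
    obtain ⟨m1, rfl, hm1z, hm1w⟩ :=
      walkUp_support hP0 hPlt hadj (z n) (w n) (hzanc n) x hxn
    obtain ⟨m2, he2, hm2z, hm2w⟩ :=
      walkUp_support hP0 hPlt hadj (z m) (w m) (hzanc m) _ hxm
    have hm12 : m1 = m2 := hinj he2
    subst hm12
    have hb1 : b (mq n) ≤ m1 := anc_le hP0 hPlt (anc_trans (hblez n) hm1z)
    have hb2 : b (mq m) ≤ m1 := anc_le hP0 hPlt (anc_trans (hblez m) hm2z)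
    have hw1 : m1 ≤ w n := anc_le hP0 hPlt hm1w
    have hw2 : m1 ≤ w m := anc_le hP0 hPlt hm2w
    rcases Nat.lt_or_ge n m with h | h
    · have := hint n m h; omega
    · have h' : m < n := by omega
      have := hint m n h'; omega
  · intro n k hk
    rw [Walk.support_copy, Walk.support_reverse, List.mem_reverse] at hk
    obtain ⟨m1, he1, hm1z, hm1w⟩ :=
      walkUp_support hP0 hPlt hadj (z n) (w n) (hzanc n) _ hk
    have hm1r : m1 ∈ Set.range b := by
      refine ⟨k, ?_⟩
      exact hinj he1
    have hzn := hkey n m1 hm1z hm1w hm1r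
    subst hzn
    show F (b k) = F (b (a n))
    rw [ha n]
    exact he1
  
end StarComb

/-- Star–Comb Lemma: a connected graph with an infinite vertex set `U`
contains a comb with all teeth in `U`, or a subdivided infinite star with all
leaves in `U`. -/
theorem star_comb_lemma {V : Type u} (G : SimpleGraph V) (hconn : G.Connected)
    (U : Set V) (hU : U.Infinite) :
    (∃ (r : GraphRay G) (a : ℕ → ℕ) (u : ℕ → V)
        (P : (n : ℕ) → G.Walk (r.f (a n)) (u n)),
      Function.Injective u ∧ (∀ n, u n ∈ U) ∧ (∀ n, (P n).IsPath) ∧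
      (∀ n m, n ≠ m → ∀ x ∈ (P n).support, x ∉ (P m).support) ∧
      (∀ n k, r.f k ∈ (P n).support → r.f k = r.f (a n))) ∨
    (∃ (c : V) (u : ℕ → V) (P : (n : ℕ) → G.Walk c (u n)),
      Function.Injective u ∧ (∀ n, u n ∈ U) ∧ (∀ n, (P n).IsPath) ∧
      (∀ n, u n ≠ c) ∧
      (∀ n m, n ≠ m → ∀ x ∈ (P n).support, x ∈ (P m).support → x = c)) := by
    classical
  obtain ⟨F, P, hinj, hP0, hPlt, hadj, hAinf⟩ := StarComb.exists_tree hconn U hU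
  by_cases hcase : ∀ t, ({i | F i ∈ U} ∩ {n | StarComb.Anc P t n}).Infinite →
      ∃ c, 0 < c ∧ P c = t ∧ ({i | F i ∈ U} ∩ {n | StarComb.Anc P c n}).Infinite
  · exact Or.inl (StarComb.comb_case U hinj hP0 hPlt hadj hAinf hcase)
  · push_neg at hcase
    obtain ⟨t, hinf, hfin⟩ := hcase
    refine Or.inr (StarComb.star_case U hinj hP0 hPlt hadj t hinf ?_)
    intro c hc1 hc2
    exact hfin c hc1 hc2
end
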